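/- arXiv:1604.08740 — 12 statements merged into one kernel-verified Lean document; each statement's English description precedes it below -/
import Mathlib

section
/- Let U ⊆ ℝ^d be a convex set, let w_1,…,w_T, u ∈ U, let f_1,…,f_T : U → ℝ be convex functions, and let g_t ∈ ℝ^d be a subgradient of f_t at w_t (i.e. f_t(v) ≥ f_t(w_t) + ⟨v − w_t, g_t⟩ for all v ∈ U). Suppose there are constants a, b > 0 such that for every t ≤ T, every w ∈ U and every subgradient g of f_t at w, f_t(u) ≥ f_t(w) + a⟨u − w, g⟩ + b(⟨u − w, g⟩)² (in particular at w = w_t with g = g_t). Suppose further that T ≥ 1, d ≥ 1 and there is a constant C > 0 with Σ_{t=1}^T ⟨w_t − u, g_t⟩ ≤ C·√(V_T^u · d·ln T) + C·d·ln T, where V_T^u = Σ_{t=1}^T (⟨u − w_t, g_t⟩)². Then Σ_{t=1}^T (f_t(w_t) − f_t(u)) ≤ (a²C²/(4b) + aC)·d·ln T. -/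
open scoped RealInnerProductSpace

/-- Theorem 2 of the paper (directional derivative condition implies logarithmic regret),
with the explicit constant from its proof: if the convex losses satisfy
`f_t(u) ≥ f_t(w) + a⟨u-w, g⟩ + b⟨u-w, g⟩²` for all `w ∈ U` and all subgradients `g` of
`f_t` at `w`, and the iterates enjoy the MetaGrad-type linearized regret bound
`Σ_t ⟨w_t - u, g_t⟩ ≤ C√(V_T^u · d ln T) + C d ln T`, then
`Σ_t (f_t(w_t) - f_t(u)) ≤ (a²C²/(4b) + aC) · d ln T`. -/
theorem stmt_0 {d T : ℕ} (hd : 1 ≤ d) (hT : 1 ≤ T)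
    (U : Set (EuclideanSpace ℝ (Fin d))) (hU : Convex ℝ U)
    (w : Fin T → EuclideanSpace ℝ (Fin d)) (hw : ∀ t, w t ∈ U)
    (u : EuclideanSpace ℝ (Fin d)) (hu : u ∈ U)
    (f : Fin T → EuclideanSpace ℝ (Fin d) → ℝ) (hf : ∀ t, ConvexOn ℝ U (f t))
    (g : Fin T → EuclideanSpace ℝ (Fin d))
    (hg : ∀ t, ∀ v ∈ U, f t v ≥ f t (w t) + ⟪v - w t, g t⟫)
    (a b : ℝ) (ha : 0 < a) (hb : 0 < b)
    (hcurv : ∀ t, ∀ w' ∈ U, ∀ g' : EuclideanSpace ℝ (Fin d),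
      (∀ v ∈ U, f t v ≥ f t w' + ⟪v - w', g'⟫) →
      f t u ≥ f t w' + a * ⟪u - w', g'⟫ + b * ⟪u - w', g'⟫ ^ 2)
    (C : ℝ) (hC : 0 < C)
    (hreg : ∑ t, ⟪w t - u, g t⟫ ≤
      C * Real.sqrt ((∑ t, ⟪u - w t, g t⟫ ^ 2) * (d * Real.log T)) + C * (d * Real.log T)) :
    ∑ t, (f t (w t) - f t u) ≤ (a ^ 2 * C ^ 2 / (4 * b) + a * C) * (d * Real.log T) := by
  set L : ℝ := (d : ℝ) * Real.log T with hL
  set V : ℝ := ∑ t, ⟪u - w t, g t⟫ ^ 2 with hV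
  have hL0 : 0 ≤ L := by
    apply mul_nonneg (by positivity)
    exact Real.log_nonneg (by exact_mod_cast hT)
  have hV0 : 0 ≤ V := Finset.sum_nonneg fun t _ => sq_nonneg _
  have key : ∀ t, f t (w t) - f t u ≤ a * ⟪w t - u, g t⟫ - b * ⟪u - w t, g t⟫ ^ 2 := by
    intro t
    have h := hcurv t (w t) (hw t) (g t) (hg t)
    have hs : ⟪w t - u, g t⟫ = -⟪u - w t, g t⟫ := by
      rw [← inner_neg_left]; congr 1; abel
    rw [hs]; linarith
  have hsum : ∑ t, (f t (w t) - f t u) ≤ a * (∑ t, ⟪w t - u, g t⟫) - b * V := by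
    rw [hV, Finset.mul_sum, Finset.mul_sum, ← Finset.sum_sub_distrib]
    exact Finset.sum_le_sum fun t _ => key t
  clear_value L V
  have hsq : Real.sqrt (V * L) ^ 2 = V * L := Real.sq_sqrt (mul_nonneg hV0 hL0)
  have hs0 : 0 ≤ Real.sqrt (V * L) := Real.sqrt_nonneg _
  have h2 : a * (∑ t, ⟪w t - u, g t⟫) ≤ a * C * Real.sqrt (V * L) + a * C * L := by
    have := mul_le_mul_of_nonneg_left hreg ha.le
    linarith [this]
  -- a C s - b V ≤ a² C² L / (4 b), since (2 b s - a C L? ) use nlinarith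
  have hamgm : a * C * Real.sqrt (V * L) - b * V ≤ a ^ 2 * C ^ 2 / (4 * b) * L := by
    rw [div_mul_eq_mul_div, le_div_iff₀ (by positivity : (0:ℝ) < 4 * b)]
    set s : ℝ := Real.sqrt (V * L) with hsdef
    rcases eq_or_lt_of_le hL0 with h0 | h0
    · have hs : s = 0 := by rw [hsdef, ← h0, mul_zero, Real.sqrt_zero]
      rw [hs, ← h0]
      nlinarith [mul_nonneg (mul_nonneg hb.le hb.le) hV0]
    · have h3 : 4*a*b*C*s*L ≤ 4*b^2*V*L + a^2*C^2*L^2 := by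
        nlinarith [sq_nonneg (2*b*s - a*C*L)]
      have h4 := le_of_mul_le_mul_right
        (by linarith [h3] : (4*a*b*C*s)*L ≤ (4*b^2*V + a^2*C^2*L)*L) h0
      linarith [h4]
  nlinarith [hsum, h2, hamgm]
end

section
/- Let U ⊆ ℝ^d be a convex set, let D, G > 0 with ‖u − v‖ ≤ D for all u, v ∈ U, let f : U → ℝ be a convex function and g : U → ℝ^d a subgradient map (i.e. f(v) ≥ f(w) + ⟨v − w, g(w)⟩ for all v, w ∈ U) with ‖g(w)‖ ≤ G for all w ∈ U. If u* ∈ U satisfies f(u*) ≤ f(w) for all w ∈ U, then for every w ∈ U: f(u*) ≥ f(w) + 2⟨u* − w, g(w)⟩ + (1/(DG))·(⟨u* − w, g(w)⟩)². -/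
open scoped RealInnerProductSpace

/-- Section 3 of the paper: any fixed convex function satisfies the directional derivative
condition with `a = 2` and `b = 1/(DG)` at its minimizer `u*` over `U`:
`f(u*) ≥ f(w) + 2⟨u* - w, g(w)⟩ + (1/(DG))·⟨u* - w, g(w)⟩²` for all `w ∈ U`. -/
theorem stmt_1 {d : ℕ} (U : Set (EuclideanSpace ℝ (Fin d))) (hU : Convex ℝ U)
    (D G : ℝ) (hD : 0 < D) (hG : 0 < G)
    (hdiam : ∀ u ∈ U, ∀ v ∈ U, ‖u - v‖ ≤ D)
    (f : EuclideanSpace ℝ (Fin d) → ℝ) (hf : ConvexOn ℝ U f)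
    (g : EuclideanSpace ℝ (Fin d) → EuclideanSpace ℝ (Fin d))
    (hsub : ∀ w ∈ U, ∀ v ∈ U, f v ≥ f w + ⟪v - w, g w⟫)
    (hgbound : ∀ w ∈ U, ‖g w‖ ≤ G)
    (ustar : EuclideanSpace ℝ (Fin d)) (hustar : ustar ∈ U)
    (hmin : ∀ w ∈ U, f ustar ≤ f w) :
    ∀ w ∈ U, f ustar ≥ f w + 2 * ⟪ustar - w, g w⟫ + (1 / (D * G)) * ⟪ustar - w, g w⟫ ^ 2 := by
  intro w hw
  set s : ℝ := ⟪ustar - w, g w⟫ with hs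
  have hsub' := hsub w hw ustar hustar
  have hle : s ≤ 0 := by
    have := hmin w hw
    nlinarith [hsub']
  have hcs : |s| ≤ ‖ustar - w‖ * ‖g w‖ := abs_real_inner_le_norm _ _
  have hDG : |s| ≤ D * G := by
    have h1 := hdiam ustar hustar w hw
    have h2 := hgbound w hw
    have := mul_le_mul h1 h2 (norm_nonneg _) hD.le
    linarith
  have habs : |s| = -s := abs_of_nonpos hle
  have hsq : s ^ 2 ≤ -s * (D * G) := by
    nlinarith [sq_abs s]
  have hDGpos : 0 < D * G := mul_pos hD hG
  have key : (1 / (D * G)) * s ^ 2 ≤ -s := by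
    rw [div_mul_eq_mul_div, one_mul, div_le_iff₀ hDGpos]
    linarith
  linarith
end

section
/- Let β ∈ (0,1), B > 0, C > 0, L > 0, T ≥ 1, and let r_1,…,r_T be nonnegative real numbers satisfying Σ_{t=1}^T r_t ≤ C·√(B·(Σ_{t=1}^T r_t^β)·L) + C·L. Then Σ_{t=1}^T r_t ≤ (1/c_{1/(2−β)})·(4C²·c_{1/2}²·c_β·B·L)^{1/(2−β)}·T^{(1−β)/(2−β)} + 2C·L, where c_α = (1−α)^{1−α}·α^α for α ∈ (0,1). -/
/-!
With `S = ∑ r_t`, Hölder's inequality gives `∑ r_t ^ β ≤ T ^ (1 - β) * S ^ β`, so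
`S ≤ √(D * S ^ β) + C L` with `D = C² B L T ^ (1 - β)`. By weighted AM-GM (Young's
inequality) the term `√D * S ^ (β / 2)` is at most `S / 2` plus a constant, and absorbing
`S / 2` on the left yields `S ≤ (2 - β) (β ^ β D) ^ (1 / (2 - β)) + 2 C L`. This is exactly
the claimed bound, because `c_{1/2} = 1/2` and
`c_{1/(2-β)} = ((1 - β) ^ (1 - β)) ^ (1 / (2 - β)) / (2 - β)`.
-/

open Real Finset

lemma sum_rpow_le_card_rpow_mul_rpow_sum {ι : Type*} (s : Finset ι) {f : ι → ℝ}
    (hf : ∀ i, 0 ≤ f i) {β : ℝ} (hβ0 : 0 < β) (hβ1 : β ≤ 1) :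
    ∑ i ∈ s, f i ^ β ≤ (#s : ℝ) ^ (1 - β) * (∑ i ∈ s, f i) ^ β := by
  have hHolder := inner_le_weight_mul_Lp_of_nonneg s (one_le_inv_iff₀.mpr ⟨hβ0, hβ1⟩)
    (fun _ ↦ 1) (fun i ↦ f i ^ β) (fun _ ↦ zero_le_one) (fun i ↦ rpow_nonneg (hf i) β)
  have hcancel (i : ι) : (f i ^ β) ^ β⁻¹ = f i := rpow_rpow_inv (hf i) hβ0.ne'
  simpa only [one_mul, sum_const, nsmul_eq_mul, mul_one, hcancel, inv_inv] using hHolder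

lemma mul_rpow_le_mul_add {x a ε α : ℝ} (hx : 0 ≤ x) (ha : 0 ≤ a) (hε : 0 < ε)
    (hα0 : 0 < α) (hα1 : α < 1) :
    a * x ^ α ≤ ε * x + (1 - α) * ((α / ε) ^ α * a) ^ (1 / (1 - α)) := by
  set μ := ((α / ε) ^ α * a) ^ (1 / (1 - α)) with hμdef
  have hμ : μ ^ (1 - α) = (α / ε) ^ α * a := by
    rw [hμdef, one_div, rpow_inv_rpow (by positivity) (by linarith)]
  have hsplit : a * x ^ α = (ε * x / α) ^ α * μ ^ (1 - α) := by
    rw [hμ, ← mul_assoc, ← mul_rpow (by positivity) (by positivity)]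
    field_simp
  have hAMGM := geom_mean_le_arith_mean2_weighted hα0.le (sub_nonneg.mpr hα1.le)
    (by positivity : 0 ≤ ε * x / α) (by positivity : 0 ≤ μ) (add_sub_cancel α 1)
  rw [hsplit]
  convert hAMGM using 2
  field_simp

lemma le_of_le_sqrt_mul_rpow_add {x D b β : ℝ} (hx : 0 ≤ x) (hD : 0 ≤ D) (hβ0 : 0 < β)
    (hβ1 : β < 2) (h : x ≤ √(D * x ^ β) + b) :
    x ≤ (2 - β) * (β ^ β * D) ^ (1 / (2 - β)) + 2 * b := by
  have hsqrt : √(D * x ^ β) = √D * x ^ (β / 2) := by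
    rw [sqrt_mul hD, sqrt_eq_rpow (x ^ β), ← rpow_mul hx, mul_one_div]
  have hsqrt_const : β ^ (β / 2) * √D = (β ^ β * D) ^ (1 / 2 : ℝ) := by
    rw [mul_rpow (by positivity) hD, ← rpow_mul hβ0.le, ← sqrt_eq_rpow, mul_one_div]
  have hconst : ((β / 2 / (1 / 2)) ^ (β / 2) * √D) ^ (1 / (1 - β / 2))
      = (β ^ β * D) ^ (1 / (2 - β)) := by
    rw [show β / 2 / (1 / 2) = β by ring, hsqrt_const, ← rpow_mul (by positivity)]
    congr 1
    field_simp
  have hYoung := mul_rpow_le_mul_add hx (sqrt_nonneg D) one_half_pos (by positivity : 0 < β / 2)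
    (by linarith)
  rw [hconst] at hYoung
  rw [hsqrt] at h
  linarith

/-- The constant `c_α` of the paper; it equals `exp (-binEntropy α)` for `α ∈ (0, 1)`. -/
noncomputable def entropyConst (α : ℝ) : ℝ := (1 - α) ^ (1 - α) * α ^ α

lemma entropyConst_div_add {p q : ℝ} (hp : 0 < p) (hq : 0 ≤ q) :
    entropyConst (p / (p + q)) = (q ^ q * p ^ p) ^ (1 / (p + q)) / (p + q) := by
  have hpq : 0 < p + q := by linarith
  have hsub : 1 - p / (p + q) = q / (p + q) := by field_simp; ring
  rw [entropyConst, hsub, div_rpow hq hpq.le, div_rpow hp.le hpq.le, div_mul_div_comm,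
    ← rpow_add hpq, ← add_div, add_comm q, div_self hpq.ne', rpow_one,
    mul_rpow (by positivity) (by positivity), ← rpow_mul hq, ← rpow_mul hp.le]
  ring_nf

lemma entropyConst_half : entropyConst (1 / 2) = 1 / 2 := by
  rw [entropyConst, show (1 : ℝ) - 1 / 2 = 1 / 2 by norm_num, ← rpow_add (by norm_num)]
  norm_num

lemma entropyConst_one_div_two_sub {β : ℝ} (hβ : β ≤ 1) :
    entropyConst (1 / (2 - β)) = ((1 - β) ^ (1 - β)) ^ (1 / (2 - β)) / (2 - β) := by
  have := entropyConst_div_add one_pos (sub_nonneg.mpr hβ)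
  rwa [one_rpow, mul_one, show 1 + (1 - β) = 2 - β by ring] at this

lemma two_sub_mul_rpow_eq_entropyConst {β K T : ℝ} (hβ0 : 0 ≤ β) (hβ1 : β < 1)
    (hK : 0 ≤ K) (hT : 0 ≤ T) :
    (2 - β) * (β ^ β * (K * T ^ (1 - β))) ^ (1 / (2 - β)) =
      1 / entropyConst (1 / (2 - β)) * (entropyConst β * K) ^ (1 / (2 - β)) *
        T ^ ((1 - β) / (2 - β)) := by
  have h1β : 0 < 1 - β := by linarith
  rw [entropyConst_one_div_two_sub hβ1.le, entropyConst, ← mul_one_div (1 - β), rpow_mul hT,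
    mul_assoc, mul_rpow (by positivity) (by positivity), mul_rpow (by positivity) hK,
    mul_rpow (by positivity) (by positivity), mul_rpow (by positivity) (by positivity)]
  field_simp

theorem stmt_2_general (β B C L : ℝ) (hβ : β ∈ Set.Ioo (0 : ℝ) 1) (hB : 0 < B) (hC : 0 < C)
    (hL : 0 < L) (T : ℕ) (r : Fin T → ℝ) (hr : ∀ t, 0 ≤ r t)
    (h : ∑ t, r t ≤ C * Real.sqrt (B * (∑ t, r t ^ β) * L) + C * L) :
    ∑ t, r t ≤
      (1 / ((1 - 1 / (2 - β)) ^ (1 - 1 / (2 - β)) * (1 / (2 - β)) ^ (1 / (2 - β)))) *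
          (4 * C ^ 2 * ((1 - 1 / 2 : ℝ) ^ (1 - 1 / 2 : ℝ) * (1 / 2 : ℝ) ^ (1 / 2 : ℝ)) ^ 2 *
              ((1 - β) ^ (1 - β) * β ^ β) * B * L) ^ (1 / (2 - β)) *
          (T : ℝ) ^ ((1 - β) / (2 - β)) +
        2 * C * L := by
  obtain ⟨hβ0, hβ1⟩ := hβ
  set S := ∑ t, r t
  have hK : 0 ≤ C ^ 2 * B * L := by positivity
  have hHolder : ∑ t, r t ^ β ≤ (T : ℝ) ^ (1 - β) * S ^ β := by
    simpa using sum_rpow_le_card_rpow_mul_rpow_sum univ hr hβ0 hβ1.le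
  have hS : S ≤ √(C ^ 2 * B * L * T ^ (1 - β) * S ^ β) + C * L := calc
    S ≤ C * √(B * (∑ t, r t ^ β) * L) + C * L := h
    _ = √(C ^ 2 * B * L * ∑ t, r t ^ β) + C * L := by
      rw [mul_assoc, mul_assoc, mul_assoc, sqrt_mul (sq_nonneg C), sqrt_sq hC.le]
      ring_nf
    _ ≤ √(C ^ 2 * B * L * T ^ (1 - β) * S ^ β) + C * L := by
      rw [mul_assoc _ ((T : ℝ) ^ _)]
      gcongr
  calc S ≤ (2 - β) * (β ^ β * (C ^ 2 * B * L * T ^ (1 - β))) ^ (1 / (2 - β)) + 2 * (C * L) :=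
        le_of_le_sqrt_mul_rpow_add (sum_nonneg fun t _ ↦ hr t) (by positivity) hβ0
          (by linarith) hS
    _ = 1 / entropyConst (1 / (2 - β)) *
          (4 * C ^ 2 * entropyConst (1 / 2) ^ 2 * entropyConst β * B * L) ^ (1 / (2 - β)) *
          T ^ ((1 - β) / (2 - β)) + 2 * C * L := by
      rw [entropyConst_half, show 4 * C ^ 2 * (1 / 2) ^ 2 * entropyConst β * B * L =
        entropyConst β * (C ^ 2 * B * L) by ring,
        ← two_sub_mul_rpow_eq_entropyConst hβ0.le hβ1 hK T.cast_nonneg]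
      ring

/-- Deterministic core of Theorem 3 (case `β < 1`): if nonnegative reals `r_1,…,r_T` satisfy
`Σ r_t ≤ C·√(B·(Σ r_t^β)·L) + C·L`, then
`Σ r_t ≤ (1/c_{1/(2-β)})·(4C²·c_{1/2}²·c_β·B·L)^{1/(2-β)}·T^{(1-β)/(2-β)} + 2C·L`,
where `c_α = (1-α)^(1-α)·α^α`. -/
theorem stmt_2 (β B C L : ℝ) (hβ : β ∈ Set.Ioo (0 : ℝ) 1) (hB : 0 < B) (hC : 0 < C)
    (hL : 0 < L) (T : ℕ) (hT : 1 ≤ T) (r : Fin T → ℝ) (hr : ∀ t, 0 ≤ r t)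
    (h : ∑ t, r t ≤ C * Real.sqrt (B * (∑ t, r t ^ β) * L) + C * L) :
    ∑ t, r t ≤
      (1 / ((1 - 1 / (2 - β)) ^ (1 - 1 / (2 - β)) * (1 / (2 - β)) ^ (1 / (2 - β)))) *
          (4 * C ^ 2 * ((1 - 1 / 2 : ℝ) ^ (1 - 1 / 2 : ℝ) * (1 / 2 : ℝ) ^ (1 / 2 : ℝ)) ^ 2 *
              ((1 - β) ^ (1 - β) * β ^ β) * B * L) ^ (1 / (2 - β)) *
          (T : ℝ) ^ ((1 - β) / (2 - β)) +
        2 * C * L :=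
  stmt_2_general β B C L hβ hB hC hL T r hr h
end

section
/- Let (X, Y) be a random pair with X taking values in the closed unit ball of ℝ^d (so ‖X‖ ≤ 1 almost surely) and Y taking values in {−1, +1}. Let μ = E[Y·X] and assume ‖μ‖ > 0, and let λ_max be the maximum eigenvalue of E[X·Xᵀ]. For w in the closed unit ball U of ℝ^d, define the hinge-loss subgradient g(w) = −Y·X·𝟙[Y·⟨w, X⟩ < 1]. Let u* ∈ U be a minimizer over U of the expected hinge loss u ↦ E[max{0, 1 − Y·⟨u, X⟩}]. Then for every w ∈ U: (w − u*)ᵀ·E[g(w)·g(w)ᵀ]·(w − u*) ≤ (2·λ_max/‖μ‖)·⟨w − u*, E[g(w)]⟩. -/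
/-!
On the unit ball `|Y⟨u, X⟩| ≤ 1`, so the hinge loss is the affine function `1 - Y⟨u, X⟩` and the
expected loss is `1 - ⟨u, μ⟩`; its minimizer over the ball is therefore `u* = μ / ‖μ‖`, a unit
vector. The subgradient inequality of the hinge loss then gives
`⟨w - u*, E g(w)⟩ ≥ ⟨u* - w, μ⟩ = ‖μ‖ (1 - ⟨w, u*⟩) ≥ ‖μ‖ ‖w - u*‖² / 2`,
while `⟨v, g(w)⟩² ≤ ⟨v, X⟩²` bounds the quadratic form of `E[g gᵀ]` by
`vᵀ E[X Xᵀ] v ≤ λ_max ‖v‖²`.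
-/

open Matrix MeasureTheory

section Geometry

variable {ι : Type*} [Fintype ι]

theorem sum_sq_eq_dotProduct_self (x : ι → ℝ) : ∑ i, x i ^ 2 = x ⬝ᵥ x := by
  simp only [dotProduct, sq]

theorem dotProduct_self_nonneg (x : ι → ℝ) : 0 ≤ x ⬝ᵥ x := by
  simpa using dotProduct_star_self_nonneg x

theorem abs_dotProduct_le_one {u x : ι → ℝ} (hu : u ⬝ᵥ u ≤ 1) (hx : x ⬝ᵥ x ≤ 1) :
    |u ⬝ᵥ x| ≤ 1 := by
  have hcs : (u ⬝ᵥ x) ^ 2 ≤ (u ⬝ᵥ u) * (x ⬝ᵥ x) := by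
    rw [← sum_sq_eq_dotProduct_self, ← sum_sq_eq_dotProduct_self]
    exact Finset.sum_mul_sq_le_sq_mul_sq Finset.univ u x
  exact (sq_le_one_iff_abs_le_one _).1 (hcs.trans (mul_le_one₀ hu (dotProduct_self_nonneg x) hx))

theorem norm_le_one_of_dotProduct_self_le_one {x : ι → ℝ} (hx : x ⬝ᵥ x ≤ 1) : ‖x‖ ≤ 1 := by
  refine (pi_norm_le_iff_of_nonneg zero_le_one).2 fun i => ?_
  rw [Real.norm_eq_abs, ← sq_le_one_iff_abs_le_one]
  rw [← sum_sq_eq_dotProduct_self] at hx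
  exact (Finset.single_le_sum (fun j _ => sq_nonneg (x j)) (Finset.mem_univ i)).trans hx

theorem dotProduct_sub_self_le {w u : ι → ℝ} (hw : w ⬝ᵥ w ≤ 1) (hu : u ⬝ᵥ u = 1) :
    (w - u) ⬝ᵥ (w - u) ≤ 2 * (1 - w ⬝ᵥ u) := by
  simp only [sub_dotProduct, dotProduct_sub, dotProduct_comm u w, hu]
  linarith

theorem eq_sqrt_smul_of_forall_dotProduct_le {μ u : ι → ℝ} (hμ : 0 < √(μ ⬝ᵥ μ))
    (hu : u ⬝ᵥ u ≤ 1) (hmax : ∀ v : ι → ℝ, v ⬝ᵥ v ≤ 1 → v ⬝ᵥ μ ≤ u ⬝ᵥ μ) :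
    μ = √(μ ⬝ᵥ μ) • u := by
  set m := √(μ ⬝ᵥ μ)
  have hm : m ^ 2 = μ ⬝ᵥ μ := Real.sq_sqrt (dotProduct_self_nonneg μ)
  have hm_le : m ≤ u ⬝ᵥ μ := by
    have hunit : (m⁻¹ • μ) ⬝ᵥ (m⁻¹ • μ) = 1 := by
      simp only [smul_dotProduct, dotProduct_smul, smul_eq_mul, ← hm]
      field_simp
    have := hmax _ hunit.le
    rwa [smul_dotProduct, ← hm, smul_eq_mul, sq, inv_mul_cancel_left₀ hμ.ne'] at this
  have hzero : (m • u - μ) ⬝ᵥ (m • u - μ) ≤ 0 := by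
    simp only [sub_dotProduct, dotProduct_sub, smul_dotProduct, dotProduct_smul, smul_eq_mul,
      dotProduct_comm μ u, ← hm]
    nlinarith
  exact (sub_eq_zero.1 (dotProduct_self_eq_zero.1
    (hzero.antisymm (dotProduct_self_nonneg _)))).symm

theorem dotProduct_self_eq_one_of_eq_smul {μ u : ι → ℝ} (hμ : 0 < √(μ ⬝ᵥ μ))
    (h : μ = √(μ ⬝ᵥ μ) • u) : u ⬝ᵥ u = 1 := by
  have hm : √(μ ⬝ᵥ μ) ^ 2 = μ ⬝ᵥ μ := Real.sq_sqrt (dotProduct_self_nonneg μ)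
  have : √(μ ⬝ᵥ μ) ^ 2 * (u ⬝ᵥ u) = √(μ ⬝ᵥ μ) ^ 2 * 1 := by
    conv_rhs => rw [mul_one, hm, h]
    simp only [smul_dotProduct, dotProduct_smul, smul_eq_mul]; ring
  exact mul_left_cancel₀ (pow_pos hμ 2).ne' this

end Geometry

theorem Matrix.IsHermitian.dotProduct_mulVec_le {n : Type*} [Fintype n] [DecidableEq n]
    {A : Matrix n n ℝ} (hA : A.IsHermitian) {c : ℝ}
    (hc : c ∈ upperBounds {l : ℝ | ∃ v : n → ℝ, v ≠ 0 ∧ A *ᵥ v = l • v}) (v : n → ℝ) :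
    v ⬝ᵥ A *ᵥ v ≤ c * (v ⬝ᵥ v) := by
  have hpsd : (algebraMap ℝ _ c - A).PosSemidef := by
    refine posSemidef_iff_isHermitian_and_spectrum_nonneg.2 ⟨?_, ?_⟩
    · rw [Algebra.algebraMap_eq_smul_one]
      exact (isHermitian_one.smul (IsSelfAdjoint.all c)).sub hA
    · rw [← spectrum.singleton_sub_eq, hA.spectrum_real_eq_range_eigenvalues]
      rintro _ ⟨_, rfl, _, ⟨i, rfl⟩, rfl⟩
      exact sub_nonneg.2 <| hc ⟨_, by simpa using hA.eigenvectorBasis.orthonormal.ne_zero i,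
        hA.mulVec_eigenvectorBasis i⟩
  simpa [Algebra.algebraMap_eq_smul_one, sub_mulVec, smul_mulVec, dotProduct_smul] using
    hpsd.dotProduct_mulVec_nonneg v

theorem Matrix.PosSemidef.nonneg_of_mulVec_eq_smul {n : Type*} [Fintype n] {A : Matrix n n ℝ}
    (hA : A.PosSemidef) {v : n → ℝ} (hv : v ≠ 0) {l : ℝ} (h : A *ᵥ v = l • v) : 0 ≤ l := by
  have hvv : 0 < v ⬝ᵥ v :=
    (dotProduct_self_nonneg v).lt_of_ne (Ne.symm (dotProduct_self_eq_zero.not.2 hv))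
  have := hA.dotProduct_mulVec_nonneg v
  rwa [star_trivial, h, dotProduct_smul, smul_eq_mul, mul_nonneg_iff_of_pos_right hvv] at this

section Hinge

variable {ι : Type*} [Fintype ι]

def hingeLoss (u x : ι → ℝ) (y : ℝ) : ℝ := max 0 (1 - y * (u ⬝ᵥ x))

noncomputable def hingeSubgradient (w x : ι → ℝ) (y : ℝ) : ι → ℝ :=
  if y * (w ⬝ᵥ x) < 1 then (-y) • x else 0

theorem hingeLoss_add_dotProduct_hingeSubgradient_le (u w x : ι → ℝ) (y : ℝ) :
    hingeLoss w x y + (u - w) ⬝ᵥ hingeSubgradient w x y ≤ hingeLoss u x y := by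
  unfold hingeLoss hingeSubgradient
  split_ifs with h
  · rw [max_eq_right (by linarith), dotProduct_smul, sub_dotProduct, smul_eq_mul]
    exact le_of_eq_of_le (by ring) (le_max_right _ _)
  · rw [max_eq_left (by linarith), dotProduct_zero, add_zero]
    exact le_max_left _ _

theorem hingeLoss_eq_of_dotProduct_self_le_one {u x : ι → ℝ} {y : ℝ} (hu : u ⬝ᵥ u ≤ 1)
    (hx : x ⬝ᵥ x ≤ 1) (hy : |y| ≤ 1) : hingeLoss u x y = 1 - y * (u ⬝ᵥ x) := by
  refine max_eq_right (sub_nonneg.2 (le_trans (le_abs_self _) ?_))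
  rw [abs_mul]
  exact mul_le_one₀ hy (abs_nonneg _) (abs_dotProduct_le_one hu hx)

theorem dotProduct_smul_le_dotProduct_hingeSubgradient {u w x : ι → ℝ} {y : ℝ}
    (hu : u ⬝ᵥ u ≤ 1) (hw : w ⬝ᵥ w ≤ 1) (hx : x ⬝ᵥ x ≤ 1) (hy : |y| ≤ 1) :
    (u - w) ⬝ᵥ (y • x) ≤ (w - u) ⬝ᵥ hingeSubgradient w x y := by
  have h := hingeLoss_add_dotProduct_hingeSubgradient_le u w x y
  rw [hingeLoss_eq_of_dotProduct_self_le_one hu hx hy,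
    hingeLoss_eq_of_dotProduct_self_le_one hw hx hy, ← neg_sub w u, neg_dotProduct] at h
  rw [dotProduct_smul, sub_dotProduct, smul_eq_mul]
  linarith

theorem sq_dotProduct_hingeSubgradient_le (v w x : ι → ℝ) {y : ℝ} (hy : |y| ≤ 1) :
    (v ⬝ᵥ hingeSubgradient w x y) ^ 2 ≤ (v ⬝ᵥ x) ^ 2 := by
  unfold hingeSubgradient
  split_ifs
  · rw [dotProduct_smul, smul_eq_mul, mul_pow, neg_sq]
    exact mul_le_of_le_one_left (sq_nonneg _) ((sq_le_one_iff_abs_le_one y).2 hy)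
  · rw [dotProduct_zero, sq, zero_mul]
    exact sq_nonneg _

theorem norm_hingeSubgradient_le (w x : ι → ℝ) {y : ℝ} (hy : |y| ≤ 1) :
    ‖hingeSubgradient w x y‖ ≤ ‖x‖ := by
  unfold hingeSubgradient
  split_ifs
  · rw [norm_smul, norm_neg, Real.norm_eq_abs]
    exact mul_le_of_le_one_left (norm_nonneg _) hy
  · rw [norm_zero]
    exact norm_nonneg _

theorem Measurable.hingeSubgradient {Ω : Type*} [MeasurableSpace Ω] {X : Ω → ι → ℝ} {Y : Ω → ℝ}
    (hX : Measurable X) (hY : Measurable Y) (w : ι → ℝ) :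
    Measurable fun ω => hingeSubgradient w (X ω) (Y ω) :=
  Measurable.ite (measurableSet_lt (by fun_prop) measurable_const) (by fun_prop) measurable_const

end Hinge

section Moments

variable {ι Ω : Type*} [MeasurableSpace Ω] {P : Measure Ω}

noncomputable def secondMoment (P : Measure Ω) (f : Ω → ι → ℝ) : Matrix ι ι ℝ :=
  Matrix.of fun i j => ∫ ω, f ω i * f ω j ∂P

theorem isHermitian_secondMoment (f : Ω → ι → ℝ) : (secondMoment P f).IsHermitian := by
  ext i j
  simp only [secondMoment, conjTranspose_apply, of_apply, star_trivial, mul_comm]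

variable [Fintype ι]

theorem MeasureTheory.Integrable.const_dotProduct {f : Ω → ι → ℝ} (hf : Integrable f P)
    (v : ι → ℝ) :
    Integrable (fun ω => v ⬝ᵥ f ω) P :=
  (LinearMap.toContinuousLinearMap (dotProductBilin ℝ ℝ v)).integrable_comp hf

theorem integral_dotProduct {f : Ω → ι → ℝ} (hf : Integrable f P) (v : ι → ℝ) :
    ∫ ω, v ⬝ᵥ f ω ∂P = v ⬝ᵥ ∫ ω, f ω ∂P :=
  (LinearMap.toContinuousLinearMap (dotProductBilin ℝ ℝ v)).integral_comp_comm hf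

theorem sq_dotProduct_eq_sum (v x : ι → ℝ) :
    (v ⬝ᵥ x) ^ 2 = ∑ i, ∑ j, v i * v j * (x i * x j) := by
  rw [sq, dotProduct, Finset.sum_mul_sum]
  exact Finset.sum_congr rfl fun i _ => Finset.sum_congr rfl fun j _ => by ring

theorem integrable_sq_dotProduct {f : Ω → ι → ℝ}
    (hf : ∀ i j, Integrable (fun ω => f ω i * f ω j) P) (v : ι → ℝ) :
    Integrable (fun ω => (v ⬝ᵥ f ω) ^ 2) P := by
  simp only [sq_dotProduct_eq_sum]
  exact integrable_finsetSum _ fun i _ => integrable_finsetSum _ fun j _ => (hf i j).const_mul _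

theorem dotProduct_secondMoment_mulVec {f : Ω → ι → ℝ}
    (hf : ∀ i j, Integrable (fun ω => f ω i * f ω j) P) (v : ι → ℝ) :
    v ⬝ᵥ secondMoment P f *ᵥ v = ∫ ω, (v ⬝ᵥ f ω) ^ 2 ∂P := by
  simp only [sq_dotProduct_eq_sum]
  rw [integral_finsetSum _ fun i _ => integrable_finsetSum _ fun j _ => (hf i j).const_mul _]
  simp only [integral_finsetSum _ fun j _ => (hf _ j).const_mul _, integral_const_mul,
    dotProduct, mulVec, secondMoment, of_apply, Finset.mul_sum]
  exact Finset.sum_congr rfl fun i _ => Finset.sum_congr rfl fun j _ => by ring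

theorem posSemidef_secondMoment {f : Ω → ι → ℝ}
    (hf : ∀ i j, Integrable (fun ω => f ω i * f ω j) P) : (secondMoment P f).PosSemidef := by
  refine .of_dotProduct_mulVec_nonneg (isHermitian_secondMoment f) fun v => ?_
  rw [star_trivial, dotProduct_secondMoment_mulVec hf]
  exact integral_nonneg fun _ => sq_nonneg _

theorem integrable_mul_apply_of_norm_le [IsFiniteMeasure P] {f : Ω → ι → ℝ}
    (hf : AEStronglyMeasurable f P) {C : ℝ} (hC : ∀ᵐ ω ∂P, ‖f ω‖ ≤ C) (i j : ι) :
    Integrable (fun ω => f ω i * f ω j) P := by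
  refine Integrable.of_bound (C := C * C) ?_ ?_
  · exact ((continuous_apply i).comp_aestronglyMeasurable hf).mul
      ((continuous_apply j).comp_aestronglyMeasurable hf)
  · filter_upwards [hC] with ω hω
    rw [norm_mul]
    exact mul_le_mul ((norm_le_pi_norm _ i).trans hω) ((norm_le_pi_norm _ j).trans hω)
      (norm_nonneg _) ((norm_nonneg _).trans hω)

end Moments

section ExpectedHinge

variable {ι Ω : Type*} [Fintype ι] [MeasurableSpace Ω] {P : Measure Ω} {X : Ω → ι → ℝ}
  {Y : Ω → ℝ}

theorem integrable_smul_of_dotProduct_self_le_one [IsFiniteMeasure P] (hX : Measurable X)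
    (hY : Measurable Y) (hXb : ∀ᵐ ω ∂P, X ω ⬝ᵥ X ω ≤ 1) (hYb : ∀ ω, |Y ω| ≤ 1) :
    Integrable (fun ω => Y ω • X ω) P := by
  refine Integrable.of_bound (hY.smul hX).aestronglyMeasurable 1 ?_
  filter_upwards [hXb] with ω hω
  rw [norm_smul, Real.norm_eq_abs]
  exact mul_le_one₀ (hYb ω) (norm_nonneg _) (norm_le_one_of_dotProduct_self_le_one hω)

theorem integrable_hingeSubgradient [IsFiniteMeasure P] (hX : Measurable X)
    (hY : Measurable Y) (hXb : ∀ᵐ ω ∂P, X ω ⬝ᵥ X ω ≤ 1) (hYb : ∀ ω, |Y ω| ≤ 1) (w : ι → ℝ) :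
    Integrable (fun ω => hingeSubgradient w (X ω) (Y ω)) P := by
  refine Integrable.of_bound (hX.hingeSubgradient hY w).aestronglyMeasurable 1 ?_
  filter_upwards [hXb] with ω hω
  exact (norm_hingeSubgradient_le _ _ (hYb ω)).trans (norm_le_one_of_dotProduct_self_le_one hω)

theorem integral_hingeLoss_eq [IsProbabilityMeasure P] (hX : Measurable X)
    (hY : Measurable Y) (hXb : ∀ᵐ ω ∂P, X ω ⬝ᵥ X ω ≤ 1) (hYb : ∀ ω, |Y ω| ≤ 1) {u : ι → ℝ}
    (hu : u ⬝ᵥ u ≤ 1) :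
    ∫ ω, hingeLoss u (X ω) (Y ω) ∂P = 1 - u ⬝ᵥ ∫ ω, Y ω • X ω ∂P := by
  have hYX := integrable_smul_of_dotProduct_self_le_one hX hY hXb hYb
  calc ∫ ω, hingeLoss u (X ω) (Y ω) ∂P = ∫ ω, 1 - u ⬝ᵥ (Y ω • X ω) ∂P := by
        refine integral_congr_ae ?_
        filter_upwards [hXb] with ω hω
        rw [hingeLoss_eq_of_dotProduct_self_le_one hu hω (hYb ω), dotProduct_smul, smul_eq_mul]
    _ = 1 - u ⬝ᵥ ∫ ω, Y ω • X ω ∂P := by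
        rw [integral_sub (integrable_const 1) (hYX.const_dotProduct u), integral_dotProduct hYX]
        simp

theorem eq_sqrt_smul_of_forall_integral_hingeLoss_le [IsProbabilityMeasure P]
    (hX : Measurable X) (hY : Measurable Y) (hXb : ∀ᵐ ω ∂P, X ω ⬝ᵥ X ω ≤ 1)
    (hYb : ∀ ω, |Y ω| ≤ 1) {μ : ι → ℝ} (hμ : μ = ∫ ω, Y ω • X ω ∂P) (hμpos : 0 < √(μ ⬝ᵥ μ))
    {u : ι → ℝ} (hu : u ⬝ᵥ u ≤ 1)
    (hmin : ∀ v : ι → ℝ, v ⬝ᵥ v ≤ 1 →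
      ∫ ω, hingeLoss u (X ω) (Y ω) ∂P ≤ ∫ ω, hingeLoss v (X ω) (Y ω) ∂P) :
    μ = √(μ ⬝ᵥ μ) • u := by
  refine eq_sqrt_smul_of_forall_dotProduct_le hμpos hu fun v hv => ?_
  have h := hmin v hv
  rw [integral_hingeLoss_eq hX hY hXb hYb hu, integral_hingeLoss_eq hX hY hXb hYb hv, ← hμ] at h
  linarith

theorem dotProduct_integral_smul_le_dotProduct_integral_hingeSubgradient [IsFiniteMeasure P]
    (hX : Measurable X) (hY : Measurable Y) (hXb : ∀ᵐ ω ∂P, X ω ⬝ᵥ X ω ≤ 1)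
    (hYb : ∀ ω, |Y ω| ≤ 1) {u w : ι → ℝ} (hu : u ⬝ᵥ u ≤ 1) (hw : w ⬝ᵥ w ≤ 1) :
    (u - w) ⬝ᵥ ∫ ω, Y ω • X ω ∂P ≤
      (w - u) ⬝ᵥ ∫ ω, hingeSubgradient w (X ω) (Y ω) ∂P := by
  have hYX := integrable_smul_of_dotProduct_self_le_one hX hY hXb hYb
  have hg := integrable_hingeSubgradient hX hY hXb hYb w
  rw [← integral_dotProduct hYX, ← integral_dotProduct hg]
  refine integral_mono_ae (hYX.const_dotProduct _) (hg.const_dotProduct _) ?_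
  filter_upwards [hXb] with ω hω
  exact dotProduct_smul_le_dotProduct_hingeSubgradient hu hw hω (hYb ω)

theorem dotProduct_secondMoment_hingeSubgradient_mulVec_le [IsFiniteMeasure P]
    (hX : Measurable X) (hY : Measurable Y) (hXb : ∀ᵐ ω ∂P, X ω ⬝ᵥ X ω ≤ 1)
    (hYb : ∀ ω, |Y ω| ≤ 1) (v w : ι → ℝ) :
    v ⬝ᵥ secondMoment P (fun ω => hingeSubgradient w (X ω) (Y ω)) *ᵥ v ≤
      v ⬝ᵥ secondMoment P X *ᵥ v := by
  have hXn : ∀ᵐ ω ∂P, ‖X ω‖ ≤ 1 := hXb.mono fun _ => norm_le_one_of_dotProduct_self_le_one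
  have hXX := integrable_mul_apply_of_norm_le hX.aestronglyMeasurable hXn
  have hgg := integrable_mul_apply_of_norm_le (hX.hingeSubgradient hY w).aestronglyMeasurable
    (hXn.mono fun ω h => (norm_hingeSubgradient_le w (X ω) (hYb ω)).trans h)
  rw [dotProduct_secondMoment_mulVec hgg, dotProduct_secondMoment_mulVec hXX]
  exact integral_mono (integrable_sq_dotProduct hgg v) (integrable_sq_dotProduct hXX v)
    fun ω => sq_dotProduct_hingeSubgradient_le v w (X ω) (hYb ω)

end ExpectedHinge

theorem stmt_4_general {d : ℕ} {Ω : Type*} [MeasurableSpace Ω]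
    (P : Measure Ω) [IsProbabilityMeasure P]
    (X : Ω → Fin d → ℝ) (Y : Ω → ℝ)
    (hXmeas : Measurable X) (hYmeas : Measurable Y)
    (hXball : ∀ᵐ ω ∂P, Real.sqrt (∑ i, (X ω i) ^ 2) ≤ 1)
    (hYsign : ∀ ω, Y ω = 1 ∨ Y ω = -1)
    -- the unit ball
    (U : Set (Fin d → ℝ)) (hU : U = {x | Real.sqrt (∑ i, (x i) ^ 2) ≤ 1})
    -- μ = E[Y·X] with ‖μ‖ > 0
    (μv : Fin d → ℝ) (hμv : μv = ∫ ω, Y ω • X ω ∂P)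
    (hμpos : 0 < Real.sqrt (∑ i, (μv i) ^ 2))
    -- λ_max is the maximum eigenvalue of E[X·Xᵀ]
    (A : Matrix (Fin d) (Fin d) ℝ) (hA : A = Matrix.of fun i j => ∫ ω, X ω i * X ω j ∂P)
    (lmax : ℝ)
    (hlmax : IsGreatest {l : ℝ | ∃ v : Fin d → ℝ, v ≠ 0 ∧ A.mulVec v = l • v} lmax)
    -- the hinge-loss subgradient g(w) = −Y·X·𝟙[Y⟨w,X⟩ < 1]
    (g : (Fin d → ℝ) → Ω → Fin d → ℝ)
    (hg : ∀ w ω, g w ω = if Y ω * (w ⬝ᵥ X ω) < 1 then (-(Y ω)) • X ω else 0)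
    -- u* minimizes the expected hinge loss over U
    (ustar : Fin d → ℝ) (hustar : ustar ∈ U)
    (hmin : ∀ u ∈ U,
      ∫ ω, max 0 (1 - Y ω * (ustar ⬝ᵥ X ω)) ∂P ≤ ∫ ω, max 0 (1 - Y ω * (u ⬝ᵥ X ω)) ∂P) :
    ∀ w ∈ U,
      (w - ustar) ⬝ᵥ
          (Matrix.of fun i j => ∫ ω, g w ω i * g w ω j ∂P).mulVec (w - ustar) ≤
        (2 * lmax / Real.sqrt (∑ i, (μv i) ^ 2)) * ((w - ustar) ⬝ᵥ ∫ ω, g w ω ∂P) := by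
  subst hU hA
  obtain rfl : g = fun w ω => hingeSubgradient w (X ω) (Y ω) := funext fun w => funext (hg w)
  simp only [Set.mem_ofPred_eq, sum_sq_eq_dotProduct_self, Real.sqrt_le_one] at *
  intro w hw
  have hYb : ∀ ω, |Y ω| ≤ 1 := fun ω => by rcases hYsign ω with h | h <;> simp [h]
  have hμ := eq_sqrt_smul_of_forall_integral_hingeLoss_le hXmeas hYmeas hXball hYb hμv hμpos
    hustar hmin
  have hustar_one := dotProduct_self_eq_one_of_eq_smul hμpos hμ
  set m := √(μv ⬝ᵥ μv)
  have hlow : m * (1 - w ⬝ᵥ ustar) ≤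
      (w - ustar) ⬝ᵥ ∫ ω, hingeSubgradient w (X ω) (Y ω) ∂P := by
    calc m * (1 - w ⬝ᵥ ustar) = (ustar - w) ⬝ᵥ μv := by
          rw [hμ, dotProduct_smul, sub_dotProduct, hustar_one, smul_eq_mul]
      _ ≤ _ := hμv ▸ dotProduct_integral_smul_le_dotProduct_integral_hingeSubgradient
          hXmeas hYmeas hXball hYb hustar hw
  have hXX := integrable_mul_apply_of_norm_le hXmeas.aestronglyMeasurable
    (hXball.mono fun _ => norm_le_one_of_dotProduct_self_le_one)
  have hlmax0 : 0 ≤ lmax := by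
    obtain ⟨v, hv, hAv⟩ := hlmax.1
    exact (posSemidef_secondMoment hXX).nonneg_of_mulVec_eq_smul hv hAv
  calc _ ≤ (w - ustar) ⬝ᵥ secondMoment P X *ᵥ (w - ustar) :=
        dotProduct_secondMoment_hingeSubgradient_mulVec_le hXmeas hYmeas hXball hYb _ w
    _ ≤ lmax * ((w - ustar) ⬝ᵥ (w - ustar)) :=
        (isHermitian_secondMoment X).dotProduct_mulVec_le hlmax.2 _
    _ ≤ lmax * (2 * (1 - w ⬝ᵥ ustar)) :=
        mul_le_mul_of_nonneg_left (dotProduct_sub_self_le hw hustar_one) hlmax0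
    _ = 2 * lmax / m * (m * (1 - w ⬝ᵥ ustar)) := by field_simp
    _ ≤ _ := mul_le_mul_of_nonneg_left hlow (by positivity)

/-- Unregularized Hinge Loss lemma (Appendix A.4): for i.i.d. data on the unit ball with
labels in {−1,+1}, the hinge-loss subgradients satisfy the Bernstein condition with
`β = 1` and `B = 2·λ_max/‖μ‖`, where `μ = E[Y·X]` and `λ_max` is the maximum eigenvalue
of `E[X·Xᵀ]`: for all `w` in the unit ball `U`,
`(w − u*)ᵀ·E[g(w)g(w)ᵀ]·(w − u*) ≤ (2λ_max/‖μ‖)·⟨w − u*, E[g(w)]⟩`.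
Here `ℝ^d` is modelled as `Fin d → ℝ` with the explicit Euclidean norm. -/
theorem stmt_4 {d : ℕ} (hd : 1 ≤ d) {Ω : Type*} [MeasurableSpace Ω]
    (P : Measure Ω) [IsProbabilityMeasure P]
    (X : Ω → Fin d → ℝ) (Y : Ω → ℝ)
    (hXmeas : Measurable X) (hYmeas : Measurable Y)
    (hXball : ∀ᵐ ω ∂P, Real.sqrt (∑ i, (X ω i) ^ 2) ≤ 1)
    (hYsign : ∀ ω, Y ω = 1 ∨ Y ω = -1)
    -- the unit ball
    (U : Set (Fin d → ℝ)) (hU : U = {x | Real.sqrt (∑ i, (x i) ^ 2) ≤ 1})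
    -- μ = E[Y·X] with ‖μ‖ > 0
    (μv : Fin d → ℝ) (hμv : μv = ∫ ω, Y ω • X ω ∂P)
    (hμpos : 0 < Real.sqrt (∑ i, (μv i) ^ 2))
    -- λ_max is the maximum eigenvalue of E[X·Xᵀ]
    (A : Matrix (Fin d) (Fin d) ℝ) (hA : A = Matrix.of fun i j => ∫ ω, X ω i * X ω j ∂P)
    (lmax : ℝ)
    (hlmax : IsGreatest {l : ℝ | ∃ v : Fin d → ℝ, v ≠ 0 ∧ A.mulVec v = l • v} lmax)
    -- the hinge-loss subgradient g(w) = −Y·X·𝟙[Y⟨w,X⟩ < 1]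
    (g : (Fin d → ℝ) → Ω → Fin d → ℝ)
    (hg : ∀ w ω, g w ω = if Y ω * (w ⬝ᵥ X ω) < 1 then (-(Y ω)) • X ω else 0)
    -- u* minimizes the expected hinge loss over U
    (ustar : Fin d → ℝ) (hustar : ustar ∈ U)
    (hmin : ∀ u ∈ U,
      ∫ ω, max 0 (1 - Y ω * (ustar ⬝ᵥ X ω)) ∂P ≤ ∫ ω, max 0 (1 - Y ω * (u ⬝ᵥ X ω)) ∂P) :
    ∀ w ∈ U,
      (w - ustar) ⬝ᵥ
          (Matrix.of fun i j => ∫ ω, g w ω i * g w ω j ∂P).mulVec (w - ustar) ≤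
        (2 * lmax / Real.sqrt (∑ i, (μv i) ^ 2)) * ((w - ustar) ⬝ᵥ ∫ ω, g w ω ∂P) :=
  stmt_4_general P X Y hXmeas hYmeas hXball hYsign U hU μv hμv hμpos A hA lmax hlmax g hg ustar
    hustar hmin
end

section
/- Let d ≥ 1, let D, G > 0, and let U ⊆ ℝ^d satisfy ‖u − v‖ ≤ D for all u, v ∈ U. Let η_1,…,η_m ∈ (0, 2/(3DG)] be learning rates with prior weights π^1,…,π^m > 0 summing to 1. For each round t = 1,…,T let w_t^1,…,w_t^m ∈ U be arbitrary slave predictions and let g_t ∈ ℝ^d satisfy ‖g_t‖ ≤ G. Define the surrogate loss ℓ_t^η(u) = −η⟨w_t − u, g_t⟩ + η²(⟨u − w_t, g_t⟩)², the cumulative slave losses L_t^j = Σ_{s=1}^t ℓ_s^{η_j}(w_s^j) (with L_0^j = 0), the master prediction w_t = (Σ_{j=1}^m π^j·e^{−L_{t−1}^j}·η_j·w_t^j) / (Σ_{j=1}^m π^j·e^{−L_{t−1}^j}·η_j), and the potential Φ_t = Σ_{j=1}^m π^j·e^{−L_t^j}. Then 1 = Φ_0 ≥ Φ_1 ≥ …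 ≥ Φ_T. -/
/-!
In round `t` the loss of slave `j` multiplies its weight `π^j e^{-L^j}` by `exp (x_j - x_j²)` with
`x_j = η_j ⟪w_t - w_t^j, g_t⟫`; the diameter and step-size bounds give `x_j ≥ -2/3`, where
`exp (x - x²) ≤ 1 + x`. The master is exactly the center of mass of the slaves with weights
`π^j e^{-L^j} η_j`, so `∑_j π^j e^{-L^j} x_j = 0` and the potential cannot grow.
-/

open scoped RealInnerProductSpace
open Finset

theorem Real.sub_sq_le_log_one_add {x : ℝ} (hx : -(2 / 3) ≤ x) :
    x - x ^ 2 ≤ Real.log (1 + x) := by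
  have h1x : 0 < 1 + x := by linarith
  rcases le_or_gt 0 x with hx0 | hx0
  · calc x - x ^ 2 ≤ 1 - (1 + x)⁻¹ := by
          rw [show 1 - (1 + x)⁻¹ = x / (1 + x) by field_simp; ring, le_div_iff₀ h1x]
          nlinarith
      _ ≤ Real.log (1 + x) := Real.one_sub_inv_le_log_of_pos h1x
  · set y := x ^ 2 - x with hy
    have hy0 : 0 ≤ y := by nlinarith
    -- the degree-4 Taylor polynomial of `exp` is needed: degree 3 fails near `x = -2/3`
    have htaylor : 1 + y + y ^ 2 / 2 + y ^ 3 / 6 + y ^ 4 / 24 ≤ Real.exp y := by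
      have := Real.sum_le_exp_of_nonneg hy0 5
      simp only [sum_range_succ, sum_range_zero, Nat.factorial] at this
      norm_num at this
      linarith
    have hpoly : 1 ≤ (1 + x) * (1 + y + y ^ 2 / 2 + y ^ 3 / 6 + y ^ 4 / 24) := by
      rw [hy]
      nlinarith [sq_nonneg x, sq_nonneg (x + 2/3), sq_nonneg (x * (x + 2/3)),
        sq_nonneg (x ^ 2 * (x + 2/3)), sq_nonneg (x ^ 3 * (x + 2/3))]
    have hexp : 1 ≤ (1 + x) * Real.exp y :=
      hpoly.trans (mul_le_mul_of_nonneg_left htaylor h1x.le)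
    rw [Real.le_log_iff_exp_le h1x, show x - x ^ 2 = -y by ring, Real.exp_neg,
      inv_eq_one_div, div_le_iff₀ (Real.exp_pos y)]
    linarith

theorem Real.exp_sub_sq_le_one_add {x : ℝ} (hx : -(2 / 3) ≤ x) :
    Real.exp (x - x ^ 2) ≤ 1 + x :=
  (Real.le_log_iff_exp_le (by linarith)).1 (Real.sub_sq_le_log_one_add hx)

theorem Finset.sum_mul_exp_sub_sq_le {ι : Type*} (s : Finset ι) (p x : ι → ℝ)
    (hp : ∀ i ∈ s, 0 ≤ p i) (hx : ∀ i ∈ s, -(2 / 3) ≤ x i) (hpx : ∑ i ∈ s, p i * x i = 0) :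
    ∑ i ∈ s, p i * Real.exp (x i - x i ^ 2) ≤ ∑ i ∈ s, p i :=
  calc ∑ i ∈ s, p i * Real.exp (x i - x i ^ 2) ≤ ∑ i ∈ s, p i * (1 + x i) :=
        sum_le_sum fun i hi =>
          mul_le_mul_of_nonneg_left (Real.exp_sub_sq_le_one_add (hx i hi)) (hp i hi)
    _ = ∑ i ∈ s, p i := by simp only [mul_add, mul_one, sum_add_distrib, hpx, add_zero]

theorem Finset.sum_smul_centerMass_sub {R E ι : Type*} [Field R] [AddCommGroup E] [Module R E]
    (t : Finset ι) (w : ι → R) (z : ι → E) (hw : ∑ i ∈ t, w i ≠ 0) :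
    ∑ i ∈ t, w i • (t.centerMass w z - z i) = 0 := by
  rw [sum_congr rfl fun i _ => smul_sub (w i) _ _, sum_sub_distrib, ← sum_smul, centerMass,
    smul_inv_smul₀ hw, sub_self]

theorem abs_mul_inner_le_two_div_three {E : Type*} [NormedAddCommGroup E]
    [InnerProductSpace ℝ E]
    {a g : E} {D G η : ℝ} (hD : 0 < D) (hG : 0 < G) (ha : ‖a‖ ≤ D) (hg : ‖g‖ ≤ G)
    (hη₀ : 0 ≤ η) (hη : η ≤ 2 / (3 * D * G)) : |η * ⟪a, g⟫| ≤ 2 / 3 :=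
  calc |η * ⟪a, g⟫| = η * |⟪a, g⟫| := by rw [abs_mul, abs_of_nonneg hη₀]
    _ ≤ 2 / (3 * D * G) * (D * G) := by
        gcongr
        exact (abs_real_inner_le_norm a g).trans (mul_le_mul ha hg (norm_nonneg g) hD.le)
    _ = 2 / 3 := by field_simp

theorem stmt_5_general {d m T : ℕ}
    (D G : ℝ) (hD : 0 < D) (hG : 0 < G)
    (U : Set (EuclideanSpace ℝ (Fin d))) (hUconv : Convex ℝ U)
    (hdiam : ∀ u ∈ U, ∀ v ∈ U, ‖u - v‖ ≤ D)
    (η : Fin m → ℝ) (hη : ∀ j, η j ∈ Set.Ioc (0 : ℝ) (2 / (3 * D * G)))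
    (π : Fin m → ℝ) (hπ : ∀ j, 0 < π j) (hπsum : ∑ j, π j = 1)
    -- slave predictions and gradients for rounds 1,…,T
    (ws : ℕ → Fin m → EuclideanSpace ℝ (Fin d))
    (hws : ∀ t, 1 ≤ t → t ≤ T → ∀ j, ws t j ∈ U)
    (g : ℕ → EuclideanSpace ℝ (Fin d)) (hg : ∀ t, 1 ≤ t → t ≤ T → ‖g t‖ ≤ G)
    -- master predictions
    (w : ℕ → EuclideanSpace ℝ (Fin d))
    -- the surrogate loss ℓ_t^η(u) = −η⟨w_t − u, g_t⟩ + η²⟨u − w_t, g_t⟩²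
    (ℓ : ℕ → ℝ → EuclideanSpace ℝ (Fin d) → ℝ)
    (hℓ : ∀ t e u, ℓ t e u = -e * ⟪w t - u, g t⟫ + e ^ 2 * ⟪u - w t, g t⟫ ^ 2)
    -- cumulative slave losses L_t^j = Σ_{s=1}^t ℓ_s^{η_j}(w_s^j)
    (L : ℕ → Fin m → ℝ)
    (hL : ∀ t j, L t j = ∑ s ∈ Finset.Icc 1 t, ℓ s (η j) (ws s j))
    -- master prediction: tilted exponentially weighted average of the slaves
    (hw : ∀ t, 1 ≤ t → t ≤ T →
      w t = (∑ j, π j * Real.exp (-(L (t - 1) j)) * η j)⁻¹ •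
        ∑ j, (π j * Real.exp (-(L (t - 1) j)) * η j) • ws t j)
    -- the potential
    (Φ : ℕ → ℝ) (hΦ : ∀ t, Φ t = ∑ j, π j * Real.exp (-(L t j))) :
    Φ 0 = 1 ∧ ∀ t, t < T → Φ (t + 1) ≤ Φ t := by
  refine ⟨by simp [hΦ, hL, hπsum], fun t ht => ?_⟩
  have h1 : 1 ≤ t + 1 := t.succ_pos
  set c : Fin m → ℝ := fun j => π j * Real.exp (-(L t j)) * η j
  have hc : ∀ j, 0 < c j := fun j => mul_pos (mul_pos (hπ j) (Real.exp_pos _)) (hη j).1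
  have hcsum : 0 < ∑ j, c j :=
    sum_pos (fun j _ => hc j) (nonempty_of_sum_ne_zero (hπsum ▸ one_ne_zero))
  have hwt : w (t + 1) = univ.centerMass c (ws (t + 1)) := hw (t + 1) h1 ht
  have hwU : w (t + 1) ∈ U :=
    hwt ▸ hUconv.centerMass_mem (fun j _ => (hc j).le) hcsum
      (fun j _ => hws (t + 1) h1 ht j)
  set x : Fin m → ℝ := fun j => η j * ⟪w (t + 1) - ws (t + 1) j, g (t + 1)⟫
  have hstep : ∀ j, π j * Real.exp (-(L (t + 1) j)) =
      π j * Real.exp (-(L t j)) * Real.exp (x j - x j ^ 2) := fun j => by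
    rw [hL (t + 1), sum_Icc_succ_top h1, ← hL, hℓ, mul_assoc, ← Real.exp_add,
      ← neg_sub (w (t + 1)), inner_neg_left]
    congr 2
    ring
  have hx : ∀ j ∈ univ, -(2 / 3) ≤ x j := fun j _ =>
    (abs_le.1 (abs_mul_inner_le_two_div_three hD hG (hdiam _ hwU _ (hws _ h1 ht j))
      (hg _ h1 ht) (hη j).1.le (hη j).2)).1
  have hpx : ∑ j, π j * Real.exp (-(L t j)) * x j = 0 := by
    have h := congrArg (⟪·, g (t + 1)⟫)
      (hwt ▸ univ.sum_smul_centerMass_sub c (ws (t + 1)) hcsum.ne')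
    simp only [sum_inner, real_inner_smul_left, inner_zero_left] at h
    rw [← h]
    exact sum_congr rfl fun j _ => by ring
  rw [hΦ, hΦ]
  simp only [hstep]
  exact univ.sum_mul_exp_sub_sq_le _ x (fun j _ => (mul_pos (hπ j) (Real.exp_pos _)).le) hx hpx

/-- Lemma 4 of the paper (Master combines slaves, full version, α = 1): the potential
`Φ_t = Σ_j π^j·exp(−L_t^j)` of the tilted exponentially weighted average master satisfies
`1 = Φ_0 ≥ Φ_1 ≥ … ≥ Φ_T`. -/
theorem stmt_5 {d m T : ℕ} (hd : 1 ≤ d)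
    (D G : ℝ) (hD : 0 < D) (hG : 0 < G)
    (U : Set (EuclideanSpace ℝ (Fin d))) (hUconv : Convex ℝ U)
    (hdiam : ∀ u ∈ U, ∀ v ∈ U, ‖u - v‖ ≤ D)
    (η : Fin m → ℝ) (hη : ∀ j, η j ∈ Set.Ioc (0 : ℝ) (2 / (3 * D * G)))
    (π : Fin m → ℝ) (hπ : ∀ j, 0 < π j) (hπsum : ∑ j, π j = 1)
    -- slave predictions and gradients for rounds 1,…,T
    (ws : ℕ → Fin m → EuclideanSpace ℝ (Fin d))
    (hws : ∀ t, 1 ≤ t → t ≤ T → ∀ j, ws t j ∈ U)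
    (g : ℕ → EuclideanSpace ℝ (Fin d)) (hg : ∀ t, 1 ≤ t → t ≤ T → ‖g t‖ ≤ G)
    -- master predictions
    (w : ℕ → EuclideanSpace ℝ (Fin d))
    -- the surrogate loss ℓ_t^η(u) = −η⟨w_t − u, g_t⟩ + η²⟨u − w_t, g_t⟩²
    (ℓ : ℕ → ℝ → EuclideanSpace ℝ (Fin d) → ℝ)
    (hℓ : ∀ t e u, ℓ t e u = -e * ⟪w t - u, g t⟫ + e ^ 2 * ⟪u - w t, g t⟫ ^ 2)
    -- cumulative slave losses L_t^j = Σ_{s=1}^t ℓ_s^{η_j}(w_s^j)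
    (L : ℕ → Fin m → ℝ)
    (hL : ∀ t j, L t j = ∑ s ∈ Finset.Icc 1 t, ℓ s (η j) (ws s j))
    -- master prediction: tilted exponentially weighted average of the slaves
    (hw : ∀ t, 1 ≤ t → t ≤ T →
      w t = (∑ j, π j * Real.exp (-(L (t - 1) j)) * η j)⁻¹ •
        ∑ j, (π j * Real.exp (-(L (t - 1) j)) * η j) • ws t j)
    -- the potential
    (Φ : ℕ → ℝ) (hΦ : ∀ t, Φ t = ∑ j, π j * Real.exp (-(L t j))) :
    Φ 0 = 1 ∧ ∀ t, t < T → Φ (t + 1) ≤ Φ t :=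
  stmt_5_general D G hD hG U hUconv hdiam η hη π hπ hπsum ws hws g hg w ℓ hℓ L hL hw Φ hΦ
end

section
/- Let d ≥ 1 and let x_1,…,x_d be real numbers with x_i ≥ −2/3 for every i. Then exp((1/d)·Σ_{i=1}^d (x_i − x_i²)) ≤ 1 + (1/d)·Σ_{i=1}^d x_i. -/
/-!
By convexity of `exp` (Jensen with uniform weights `1/d`) it suffices to prove the
one-variable bound `exp (x - x²) ≤ 1 + x` for `x ≥ -2/3`. For `x ≥ 0` it follows from
`log (1 + x) ≥ x / (1 + x) ≥ x - x²`. For `-2/3 ≤ x ≤ 0` put `t = x² - x ≥ 0`; then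
`exp t` dominates its Taylor polynomial of degree 4, and `(1 + x)` times that polynomial is
still at least `1` on `[-2/3, 0]`.
-/

open Real Finset

namespace Real

theorem exp_sub_sq_le_one_add_of_nonneg {x : ℝ} (hx : 0 ≤ x) : exp (x - x ^ 2) ≤ 1 + x := by
  have hpos : 0 < 1 + x := by linarith
  rw [← le_log_iff_exp_le hpos]
  calc x - x ^ 2 ≤ 1 - (1 + x)⁻¹ := by
        rw [← sub_nonneg]
        field_simp
        nlinarith [pow_nonneg hx 3]
    _ ≤ log (1 + x) := one_sub_inv_le_log_of_pos hpos

theorem exp_sub_sq_le_one_add_of_nonpos {x : ℝ} (hx : -2 / 3 ≤ x) (hx0 : x ≤ 0) :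
    exp (x - x ^ 2) ≤ 1 + x := by
  set t := x ^ 2 - x with ht
  have htaylor : 1 + t + t ^ 2 / 2 + t ^ 3 / 6 + t ^ 4 / 24 ≤ exp t := by
    simpa [sum_range_succ, Nat.factorial] using sum_le_exp_of_nonneg (by nlinarith : 0 ≤ t) 5
  -- Degree 4 is the least that works: at `x = -2/3` this bound holds with a margin under `1%`.
  have hpoly : 1 ≤ (1 + x) * (1 + t + t ^ 2 / 2 + t ^ 3 / 6 + t ^ 4 / 24) := by
    have a : 0 ≤ x + 2 / 3 := by linarith
    have b : 0 ≤ -x := by linarith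
    nlinarith [mul_nonneg a b, mul_nonneg (mul_nonneg a b) b,
      mul_nonneg (mul_nonneg a b) (mul_nonneg b b),
      mul_nonneg a (mul_nonneg (mul_nonneg b b) (mul_nonneg b b)), sq_nonneg x,
      mul_nonneg a (sq_nonneg x), mul_nonneg b (sq_nonneg x)]
  rw [show x - x ^ 2 = -t by ring, exp_neg, inv_le_iff_one_le_mul₀' (exp_pos t)]
  calc 1 ≤ (1 + x) * (1 + t + t ^ 2 / 2 + t ^ 3 / 6 + t ^ 4 / 24) := hpoly
    _ ≤ (1 + x) * exp t := by gcongr; linarith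
    _ = exp t * (1 + x) := mul_comm _ _

theorem exp_sub_sq_le_one_add_s7 {x : ℝ} (hx : -2 / 3 ≤ x) : exp (x - x ^ 2) ≤ 1 + x :=
  (le_total 0 x).elim exp_sub_sq_le_one_add_of_nonneg (exp_sub_sq_le_one_add_of_nonpos hx)

theorem exp_mul_sum_le_mul_sum_exp {ι : Type*} {s : Finset ι} (hs : s.Nonempty) (y : ι → ℝ) :
    exp (1 / #s * ∑ i ∈ s, y i) ≤ 1 / #s * ∑ i ∈ s, exp (y i) := by
  have hw : ∑ _i ∈ s, (1 / #s : ℝ) = 1 := by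
    rw [sum_const, nsmul_eq_mul]
    field_simp [hs.card_pos.ne']
  simpa [mul_sum] using
    convexOn_exp.map_sum_le (fun _ _ => by positivity) hw (fun i _ => Set.mem_univ (y i))

end Real

theorem stmt_7_general (d : ℕ) (x : Fin d → ℝ) (hx : ∀ i, -2/3 ≤ x i) :
    Real.exp ((1 / (d : ℝ)) * ∑ i, (x i - (x i) ^ 2)) ≤ 1 + (1 / (d : ℝ)) * ∑ i, x i := by
  rcases Nat.eq_zero_or_pos d with rfl | hd
  · simp
  have hne : (univ : Finset (Fin d)).Nonempty := univ_nonempty_iff.2 ⟨⟨0, hd⟩⟩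
  calc exp (1 / d * ∑ i, (x i - x i ^ 2)) ≤ 1 / d * ∑ i, exp (x i - x i ^ 2) := by
        simpa only [card_univ, Fintype.card_fin] using
          exp_mul_sum_le_mul_sum_exp hne fun i => x i - x i ^ 2
    _ ≤ 1 / d * ∑ i, (1 + x i) := by gcongr with i; exact exp_sub_sq_le_one_add_s7 (hx i)
    _ = 1 + 1 / d * ∑ i, x i := by
        rw [sum_add_distrib, mul_add, sum_const, card_univ, Fintype.card_fin, nsmul_one]
        field_simp

/-- Diagonal-case tangent bound: for `d ≥ 1` and reals `x₁,…,x_d` with `x_i ≥ -2/3`,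
`exp((1/d)·Σ (x_i - x_i²)) ≤ 1 + (1/d)·Σ x_i`. -/
theorem stmt_7 (d : ℕ) (hd : 1 ≤ d) (x : Fin d → ℝ) (hx : ∀ i, -2/3 ≤ x i) :
    Real.exp ((1 / (d : ℝ)) * ∑ i, (x i - (x i) ^ 2)) ≤ 1 + (1 / (d : ℝ)) * ∑ i, x i :=
  stmt_7_general d x hx
end

section
/- Let d ≥ 1, let D, G > 0, and let U ⊆ ℝ^d be a nonempty closed convex set containing 0 with ‖u − v‖ ≤ D for all u, v ∈ U. Let 0 < η ≤ 1/(5DG). For t = 1,…,T let w_t ∈ U and g_t ∈ ℝ^d with ‖g_t‖ ≤ G, and set M_t = g_t·g_tᵀ. Define the slave iterates by: w_1^η = 0; for t ≥ 1, Σ_{t+1}^η = (D^{−2}·I + 2η²·Σ_{s=1}^t M_s)^{−1} (a positive definite matrix), w̃_{t+1}^η = w_t^η − Σ_{t+1}^η·(η·g_t + 2η²·M_t·(w_t^η − w_t)), and w_{t+1}^η ∈ U is the unique minimizer over u ∈ U of (u − w̃_{t+1}^η)ᵀ·(Σ_{t+1}^η)^{−1}·(u − w̃_{t+1}^η). Define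 the surrogate loss ℓ_t^η(u) = −η⟨w_t − u, g_t⟩ + η²(⟨u − w_t, g_t⟩)². Then for every u ∈ U: Σ_{t=1}^T ℓ_t^η(w_t^η) ≤ Σ_{t=1}^T ℓ_t^η(u) + ‖u‖²/(2D²) + (1/2)·ln det(I + 2η²D²·Σ_{t=1}^T M_t). -/
/-!
With `A_t = D⁻² I + 2η² ∑_{s ≤ t} g_s g_sᵀ` the inverse of `Σ_{t+1}^η`, the potential
`Φ_t = ½ (w_t^η - u)ᵀ A_{t-1} (w_t^η - u) - ½ log det A_{t-1}` drops in round `t` by at least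
`ℓ_t^η(w_t^η) - ℓ_t^η(u)`. Since the surrogate loss is quadratic, this regret is the linearised
regret `c ⟨g_t, w_t^η - u⟩` (with `c g_t` the gradient at `w_t^η`) minus `η² ⟨g_t, w_t^η - u⟩²`,
and the latter is exactly the growth of the quadratic form from `A_{t-1}` to `A_t`. The projection
onto `U` in the `A_t`-norm does not increase the distance to `u` (generalised Pythagoras), the
step-size condition gives `c² ≤ 2η²`, and the matrix determinant lemma together with
`log (1 - q) ≤ -q` bounds the remaining term `2η² g_tᵀ A_t⁻¹ g_t` by
`log det A_t - log det A_{t-1}`. Telescoping leaves `‖u‖²/(2D²) + ½ log (det A_T / det A_0)`.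
-/

open Matrix Filter Topology

lemma nonneg_of_forall_mem_Ioc_nonneg_add_mul {b c : ℝ}
    (h : ∀ s ∈ Set.Ioc (0 : ℝ) 1, 0 ≤ b + s * c) : 0 ≤ b := by
  have hlim : Tendsto (fun s : ℝ => b + s * c) (𝓝[>] 0) (𝓝 b) := by
    have hcont : Continuous fun s : ℝ => b + s * c := by fun_prop
    simpa using (hcont.tendsto 0).mono_left nhdsWithin_le_nhds
  exact ge_of_tendsto hlim (eventually_of_mem (Ioc_mem_nhdsGT one_pos) h)

lemma abs_dotProduct_le_sqrt_mul_sqrt {n : Type*} [Fintype n] (x y : n → ℝ) :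
    |x ⬝ᵥ y| ≤ √(∑ i, x i ^ 2) * √(∑ i, y i ^ 2) := by
  rw [abs_le, neg_le]
  constructor
  · simpa [dotProduct] using Real.sum_mul_le_sqrt_mul_sqrt Finset.univ (-x) y
  · exact Real.sum_mul_le_sqrt_mul_sqrt Finset.univ x y

namespace Matrix

variable {n : Type*} [Fintype n]

lemma IsSymm.dotProduct_mulVec_comm {R : Type*} [CommSemiring R] {P : Matrix n n R}
    (hP : P.IsSymm) (x y : n → R) : x ⬝ᵥ P *ᵥ y = y ⬝ᵥ P *ᵥ x := by
  rw [dotProduct_mulVec, ← mulVec_transpose, hP.eq, dotProduct_comm]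

lemma IsSymm.add_dotProduct_mulVec_add {R : Type*} [CommSemiring R] {P : Matrix n n R}
    (hP : P.IsSymm) (x y : n → R) :
    (x + y) ⬝ᵥ P *ᵥ (x + y) = x ⬝ᵥ P *ᵥ x + 2 * (x ⬝ᵥ P *ᵥ y) + y ⬝ᵥ P *ᵥ y := by
  rw [mulVec_add, dotProduct_add, add_dotProduct, add_dotProduct, hP.dotProduct_mulVec_comm y x]
  ring

lemma PosSemidef.real_dotProduct_mulVec_nonneg {P : Matrix n n ℝ} (hP : P.PosSemidef)
    (x : n → ℝ) : 0 ≤ x ⬝ᵥ P *ᵥ x := by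
  simpa using hP.dotProduct_mulVec_nonneg x

theorem PosSemidef.sub_dotProduct_mulVec_sub_le {P : Matrix n n ℝ} (hP : P.PosSemidef)
    {U : Set (n → ℝ)} (hU : Convex ℝ U) {p z u : n → ℝ} (hp : p ∈ U) (hu : u ∈ U)
    (hmin : ∀ v ∈ U, (p - z) ⬝ᵥ P *ᵥ (p - z) ≤ (v - z) ⬝ᵥ P *ᵥ (v - z)) :
    (p - u) ⬝ᵥ P *ᵥ (p - u) ≤ (z - u) ⬝ᵥ P *ᵥ (z - u) := by
  have hsymm : P.IsSymm := isHermitian_iff_isSymm.mp hP.isHermitian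
  -- first-order optimality of `p` along the segment from `p` to `u`
  have hfirst : 0 ≤ (p - z) ⬝ᵥ P *ᵥ (u - p) := by
    refine nonneg_of_forall_mem_Ioc_nonneg_add_mul
      (c := (u - p) ⬝ᵥ P *ᵥ (u - p) / 2) fun s ⟨hs0, hs1⟩ => ?_
    have h := hmin _ (hU.add_smul_sub_mem hp hu ⟨hs0.le, hs1⟩)
    rw [add_sub_right_comm, hsymm.add_dotProduct_mulVec_add] at h
    simp only [mulVec_smul, dotProduct_smul, smul_dotProduct, smul_eq_mul] at h
    nlinarith
  have hcross : (z - p) ⬝ᵥ P *ᵥ (p - u) = (p - z) ⬝ᵥ P *ᵥ (u - p) := by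
    rw [← neg_sub p z, ← neg_sub u p, mulVec_neg, dotProduct_neg, neg_dotProduct, neg_neg]
  have hsplit := hsymm.add_dotProduct_mulVec_add (z - p) (p - u)
  rw [sub_add_sub_cancel, hcross] at hsplit
  linarith [hP.real_dotProduct_mulVec_nonneg (z - p)]

variable [DecidableEq n]

theorem PosDef.mul_dotProduct_inv_mulVec_le_log_det_sub {A : Matrix n n ℝ} (hA : A.PosDef)
    {s : ℝ} (hs : 0 ≤ s) (x : n → ℝ) :
    s * (x ⬝ᵥ (A + s • vecMulVec x x)⁻¹ *ᵥ x) ≤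
      Real.log (A + s • vecMulVec x x).det - Real.log A.det := by
  set B := A + s • vecMulVec x x
  have hB : B.PosDef :=
    hA.add_posSemidef (by simpa using (posSemidef_vecMulVec_self_star x).smul hs)
  set q := s * (x ⬝ᵥ B⁻¹ *ᵥ x)
  -- matrix determinant lemma, applied to `A = B - s x xᵀ`
  have hdet : A.det = B.det * (1 - q) := by
    have hAB : A = B + replicateCol Unit (-(s • x)) * replicateRow Unit x := by
      simp only [B, ← vecMulVec_eq, neg_vecMulVec, smul_vecMulVec]; abel
    rw [hAB, det_add_replicateCol_mul_replicateRow hB.det_pos.ne'.isUnit,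
      det_unique (n := Unit), add_apply, one_apply_eq, ← replicateRow_vecMul,
      replicateRow_mul_replicateCol_apply, ← dotProduct_mulVec,
      mulVec_neg, mulVec_smul, dotProduct_neg, dotProduct_smul, smul_eq_mul, sub_eq_add_neg]
  have hq : 0 < 1 - q := by
    have := hA.det_pos
    rw [hdet] at this
    exact pos_of_mul_pos_right this hB.det_pos.le
  rw [hdet, Real.log_mul hB.det_pos.ne' hq.ne']
  linarith [Real.log_le_sub_one_of_pos hq]

end Matrix

lemma sq_add_two_mul_sq_mul_dotProduct_le {n : Type*} [Fintype n] {η D G : ℝ} (hη : 0 < η)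
    (hD : 0 < D) (hG : 0 < G) (hη' : η ≤ 1 / (5 * D * G)) {g x w : n → ℝ}
    (hg : √(∑ i, g i ^ 2) ≤ G) (hxw : √(∑ i, (x i - w i) ^ 2) ≤ D) :
    (η + 2 * η ^ 2 * (g ⬝ᵥ (x - w))) ^ 2 ≤ 2 * η ^ 2 := by
  set a := g ⬝ᵥ (x - w)
  have ha : |a| ≤ G * D :=
    (abs_dotProduct_le_sqrt_mul_sqrt g (x - w)).trans (mul_le_mul hg hxw (by positivity) hG.le)
  have hηa : |η * a| ≤ 1 / 5 := by
    rw [abs_mul, abs_of_pos hη]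
    calc η * |a| ≤ η * (G * D) := by gcongr
      _ ≤ 1 / 5 := by rw [le_div_iff₀ (by positivity)] at hη'; linarith
  obtain ⟨hlo, hhi⟩ := abs_le.mp hηa
  have h : (1 + 2 * (η * a)) ^ 2 ≤ 2 := by nlinarith
  calc (η + 2 * η ^ 2 * a) ^ 2 = η ^ 2 * (1 + 2 * (η * a)) ^ 2 := by ring
    _ ≤ η ^ 2 * 2 := by gcongr
    _ = 2 * η ^ 2 := mul_comm _ _

section Surrogate

variable {n : Type*} [Fintype n]

def surrogateLoss (η : ℝ) (w g u : n → ℝ) : ℝ :=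
  -η * ((w - u) ⬝ᵥ g) + η ^ 2 * ((u - w) ⬝ᵥ g) ^ 2

lemma surrogateLoss_sub_surrogateLoss (η : ℝ) (w g x u : n → ℝ) :
    surrogateLoss η w g x - surrogateLoss η w g u =
      (η + 2 * η ^ 2 * (g ⬝ᵥ (x - w))) * (g ⬝ᵥ (x - u)) - η ^ 2 * (g ⬝ᵥ (x - u)) ^ 2 := by
  simp only [surrogateLoss, sub_dotProduct, dotProduct_comm g]
  ring

lemma smul_add_smul_vecMulVec_mulVec (η : ℝ) (g v : n → ℝ) :
    η • g + (2 * η ^ 2) • (vecMulVec g g *ᵥ v) = (η + 2 * η ^ 2 * (g ⬝ᵥ v)) • g := by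
  rw [vecMulVec_mulVec, op_smul_eq_smul, smul_smul, add_smul]

end Surrogate

section OnlineNewtonStep

variable {n : Type*} [Fintype n] [DecidableEq n]

theorem onlineNewtonStep_regret_le_potential_sub {A A' : Matrix n n ℝ} (hA : A.PosDef) {η c : ℝ}
    {g x z p u : n → ℝ}
    (hA' : A' = A + (2 * η ^ 2) • vecMulVec g g) (hc : c ^ 2 ≤ 2 * η ^ 2)
    {U : Set (n → ℝ)} (hU : Convex ℝ U) (hp : p ∈ U) (hu : u ∈ U)
    (hz : z = x - A'⁻¹ *ᵥ (c • g))
    (hmin : ∀ v ∈ U, (p - z) ⬝ᵥ A' *ᵥ (p - z) ≤ (v - z) ⬝ᵥ A' *ᵥ (v - z)) :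
    c * (g ⬝ᵥ (x - u)) - η ^ 2 * (g ⬝ᵥ (x - u)) ^ 2 ≤
      ((x - u) ⬝ᵥ A *ᵥ (x - u) - Real.log A.det) / 2 -
        ((p - u) ⬝ᵥ A' *ᵥ (p - u) - Real.log A'.det) / 2 := by
  have hA'pd : A'.PosDef := hA' ▸ hA.add_posSemidef
    (by simpa using (posSemidef_vecMulVec_self_star g).smul (by positivity : (0 : ℝ) ≤ 2 * η ^ 2))
  set R := g ⬝ᵥ A'⁻¹ *ᵥ g
  have hR : 0 ≤ R := hA'pd.inv.posSemidef.real_dotProduct_mulVec_nonneg g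
  have hproj := hA'pd.posSemidef.sub_dotProduct_mulVec_sub_le hU hp hu hmin
  have hexpand : (z - u) ⬝ᵥ A' *ᵥ (z - u) =
      (x - u) ⬝ᵥ A' *ᵥ (x - u) - 2 * (c * (g ⬝ᵥ (x - u))) + c ^ 2 * R := by
    have hcancel : A' *ᵥ (A'⁻¹ *ᵥ g) = g := by
      rw [mulVec_mulVec, mul_nonsing_inv _ hA'pd.det_pos.ne'.isUnit, one_mulVec]
    rw [hz, sub_right_comm, sub_eq_add_neg,
      (isHermitian_iff_isSymm.mp hA'pd.isHermitian).add_dotProduct_mulVec_add]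
    simp only [mulVec_neg, mulVec_smul, hcancel, dotProduct_neg, neg_dotProduct,
      dotProduct_smul, smul_dotProduct, smul_eq_mul]
    rw [dotProduct_comm (x - u) g, dotProduct_comm (A'⁻¹ *ᵥ g) g]
    ring
  have hgrow : (x - u) ⬝ᵥ A' *ᵥ (x - u) =
      (x - u) ⬝ᵥ A *ᵥ (x - u) + 2 * η ^ 2 * (g ⬝ᵥ (x - u)) ^ 2 := by
    rw [hA', add_mulVec, dotProduct_add, smul_mulVec, dotProduct_smul, vecMulVec_mulVec,
      op_smul_eq_smul, dotProduct_smul, dotProduct_comm (x - u) g, smul_eq_mul, smul_eq_mul]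
    ring
  have hlogdet : 2 * η ^ 2 * R ≤ Real.log A'.det - Real.log A.det := by
    have h := hA.mul_dotProduct_inv_mulVec_le_log_det_sub (by positivity : (0 : ℝ) ≤ 2 * η ^ 2) g
    rwa [← hA'] at h
  nlinarith [mul_le_mul_of_nonneg_right hc hR]

end OnlineNewtonStep

section Precision

variable {n : Type*} [DecidableEq n]

/-- `onsPrecision D η g t` is the inverse `(Σ_{t+1}^η)⁻¹` of the slave's covariance matrix. -/
noncomputable def onsPrecision (D η : ℝ) (g : ℕ → n → ℝ) (t : ℕ) : Matrix n n ℝ :=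
  (D ^ 2)⁻¹ • 1 + (2 * η ^ 2) • ∑ s ∈ Finset.Icc 1 t, vecMulVec (g s) (g s)

variable {D η : ℝ} {g : ℕ → n → ℝ}

lemma onsPrecision_zero : onsPrecision D η g 0 = (D ^ 2)⁻¹ • 1 := by
  simp [onsPrecision]

lemma onsPrecision_succ (t : ℕ) :
    onsPrecision D η g (t + 1) =
      onsPrecision D η g t + (2 * η ^ 2) • vecMulVec (g (t + 1)) (g (t + 1)) := by
  rw [onsPrecision, onsPrecision, Finset.sum_Icc_succ_top (by omega), smul_add, add_assoc]

lemma posDef_onsPrecision [Fintype n] (hD : D ≠ 0) (t : ℕ) : (onsPrecision D η g t).PosDef :=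
  (PosDef.one.smul (by positivity)).add_posSemidef <| PosSemidef.smul
    (posSemidef_sum _ fun s _ => by simpa using posSemidef_vecMulVec_self_star (g s))
    (by positivity)

lemma log_det_onsPrecision_sub_log_det_onsPrecision_zero [Fintype n] (hD : D ≠ 0) (t : ℕ) :
    Real.log (onsPrecision D η g t).det - Real.log (onsPrecision D η g 0).det =
      Real.log (1 + (2 * η ^ 2 * D ^ 2) • ∑ s ∈ Finset.Icc 1 t, vecMulVec (g s) (g s)).det := by
  have hscale : onsPrecision D η g t =
      (D ^ 2)⁻¹ • (1 + (2 * η ^ 2 * D ^ 2) • ∑ s ∈ Finset.Icc 1 t, vecMulVec (g s) (g s)) := by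
    rw [onsPrecision, smul_add, smul_smul]
    congr 2
    field_simp
  have hpos := (posDef_onsPrecision (η := η) (g := g) hD t).det_pos
  rw [hscale, det_smul] at hpos ⊢
  rw [onsPrecision_zero, det_smul, det_one, mul_one,
    Real.log_mul (by positivity) (pos_of_mul_pos_right hpos (by positivity)).ne',
    add_sub_cancel_left]

end Precision

lemma Finset.sum_Icc_le_sub_of_le {a Φ : ℕ → ℝ} {m n : ℕ} (hmn : m ≤ n + 1)
    (h : ∀ t ∈ Finset.Icc m n, a t ≤ Φ t - Φ (t + 1)) :
    ∑ t ∈ Finset.Icc m n, a t ≤ Φ m - Φ (n + 1) := by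
  calc ∑ t ∈ Finset.Icc m n, a t ≤ ∑ t ∈ Finset.Icc m n, (Φ t - Φ (t + 1)) := sum_le_sum h
    _ = Φ m - Φ (n + 1) := by
      rw [← Finset.Ico_add_one_right_eq_Icc, ← neg_sub, ← Finset.sum_Ico_sub _ hmn,
        ← Finset.sum_neg_distrib]
      simp

theorem stmt_8_general {d T : ℕ}
    (D G η : ℝ) (hD : 0 < D) (hG : 0 < G) (hη : 0 < η) (hη' : η ≤ 1 / (5 * D * G))
    (U : Set (Fin d → ℝ)) (hUconv : Convex ℝ U)
    (hU0 : (0 : Fin d → ℝ) ∈ U)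
    (hdiam : ∀ u ∈ U, ∀ v ∈ U, Real.sqrt (∑ i, (u i - v i) ^ 2) ≤ D)
    -- master points and gradients for rounds 1,…,T
    (w : ℕ → Fin d → ℝ) (hw : ∀ t, 1 ≤ t → t ≤ T → w t ∈ U)
    (g : ℕ → Fin d → ℝ) (hg : ∀ t, 1 ≤ t → t ≤ T → Real.sqrt (∑ i, (g t i) ^ 2) ≤ G)
    -- the rank-one matrices M_t = g_t g_tᵀ
    (M : ℕ → Matrix (Fin d) (Fin d) ℝ)
    (hM : ∀ t, M t = Matrix.of fun i j => g t i * g t j)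
    -- the slave's covariance matrices Σ_{t+1}^η = (D⁻²·I + 2η²·Σ_{s≤t} M_s)⁻¹
    (S : ℕ → Matrix (Fin d) (Fin d) ℝ)
    (hS : ∀ t, 1 ≤ t → S (t + 1) =
      ((D ^ 2)⁻¹ • (1 : Matrix (Fin d) (Fin d) ℝ) + (2 * η ^ 2) • ∑ s ∈ Finset.Icc 1 t, M s)⁻¹)
    -- the slave iterates: w_1^η = 0, unprojected update w̃, projection onto U
    (wη wtil : ℕ → Fin d → ℝ) (hwη1 : wη 1 = 0)
    (hwtil : ∀ t, 1 ≤ t → t ≤ T → wtil (t + 1) =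
      wη t - (S (t + 1)).mulVec (η • g t + (2 * η ^ 2) • (M t).mulVec (wη t - w t)))
    (hproj : ∀ t, 1 ≤ t → t ≤ T → wη (t + 1) ∈ U ∧ ∀ u ∈ U,
      (wη (t + 1) - wtil (t + 1)) ⬝ᵥ (S (t + 1))⁻¹.mulVec (wη (t + 1) - wtil (t + 1)) ≤
        (u - wtil (t + 1)) ⬝ᵥ (S (t + 1))⁻¹.mulVec (u - wtil (t + 1)))
    -- the surrogate loss ℓ_t^η(u) = −η⟨w_t − u, g_t⟩ + η²⟨u − w_t, g_t⟩²
    (ℓ : ℕ → (Fin d → ℝ) → ℝ)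
    (hℓ : ∀ t u, ℓ t u = -η * ((w t - u) ⬝ᵥ g t) + η ^ 2 * ((u - w t) ⬝ᵥ g t) ^ 2) :
    ∀ u ∈ U,
      ∑ t ∈ Finset.Icc 1 T, ℓ t (wη t) ≤
        ∑ t ∈ Finset.Icc 1 T, ℓ t u + (∑ i, (u i) ^ 2) / (2 * D ^ 2) +
          (1 / 2) * Real.log
            (Matrix.det (1 + (2 * η ^ 2 * D ^ 2) • ∑ t ∈ Finset.Icc 1 T, M t)) := by
  obtain rfl : M = fun t => vecMulVec (g t) (g t) := funext hM
  obtain rfl : ℓ = fun t => surrogateLoss η (w t) (g t) := funext fun t => funext (hℓ t)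
  intro u hu
  set A := onsPrecision D η g
  have hA : ∀ t, (A t).PosDef := posDef_onsPrecision hD.ne'
  have hSA : ∀ t, 1 ≤ t → S (t + 1) = (A t)⁻¹ := hS
  have hmem : ∀ t ∈ Finset.Icc 1 T, wη t ∈ U := by
    rintro (_ | _ | t) ht
    exacts [by simp at ht, hwη1 ▸ hU0, (hproj (t + 1) (by omega) (by simp at ht; omega)).1]
  set Φ : ℕ → ℝ := fun t =>
    ((wη t - u) ⬝ᵥ A (t - 1) *ᵥ (wη t - u) - Real.log (A (t - 1)).det) / 2
  have hround : ∀ t ∈ Finset.Icc 1 T,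
      surrogateLoss η (w t) (g t) (wη t) - surrogateLoss η (w t) (g t) u ≤ Φ t - Φ (t + 1) := by
    rintro (_ | i) ht
    · simp at ht
    obtain ⟨ht1, htT⟩ := Finset.mem_Icc.mp ht
    simp only [Φ, surrogateLoss_sub_surrogateLoss, Nat.add_sub_cancel]
    refine onlineNewtonStep_regret_le_potential_sub (hA i) (onsPrecision_succ i)
      (sq_add_two_mul_sq_mul_dotProduct_le hη hD hG hη' (hg _ ht1 htT)
        (hdiam _ (hmem _ ht) _ (hw _ ht1 htT))) hUconv (hproj _ ht1 htT).1 hu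
      ((hwtil _ ht1 htT).trans (by rw [smul_add_smul_vecMulVec_mulVec, hSA _ ht1])) ?_
    simpa [hSA _ ht1, nonsing_inv_nonsing_inv _ (hA _).det_pos.ne'.isUnit]
      using (hproj _ ht1 htT).2
  have hΦ1 : Φ 1 = (∑ i, u i ^ 2) / (2 * D ^ 2) - Real.log (A 0).det / 2 := by
    simp only [Φ, A, hwη1, Nat.sub_self, onsPrecision_zero, smul_mulVec, one_mulVec, zero_sub,
      dotProduct_smul, neg_dotProduct, dotProduct_neg, neg_neg, smul_eq_mul]
    rw [show u ⬝ᵥ u = ∑ i, u i ^ 2 by simp [dotProduct, sq]]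
    field_simp
  have hΦ : -Φ (T + 1) ≤ Real.log (A T).det / 2 := by
    simp only [Φ, Nat.add_sub_cancel]
    linarith [(hA T).posSemidef.real_dotProduct_mulVec_nonneg (wη (T + 1) - u)]
  have htel := Finset.sum_Icc_le_sub_of_le (by omega) hround
  rw [Finset.sum_sub_distrib] at htel
  linarith [log_det_onsPrecision_sub_log_det_onsPrecision_zero (η := η) (g := g) hD.ne' T]

/-- Lemma 5 of the paper (Surrogate regret bound, full version): the MetaGrad Slave with
learning rate `0 < η ≤ 1/(5DG)` satisfies, for every `u ∈ U`,
`Σ_t ℓ_t^η(w_t^η) ≤ Σ_t ℓ_t^η(u) + ‖u‖²/(2D²) + ½·ln det(I + 2η²D²·Σ_t M_t)`.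
Here `ℝ^d` is modelled as `Fin d → ℝ` with the explicit Euclidean norm. -/
theorem stmt_8 {d T : ℕ} (hd : 1 ≤ d)
    (D G η : ℝ) (hD : 0 < D) (hG : 0 < G) (hη : 0 < η) (hη' : η ≤ 1 / (5 * D * G))
    (U : Set (Fin d → ℝ)) (hUne : U.Nonempty) (hUclosed : IsClosed U) (hUconv : Convex ℝ U)
    (hU0 : (0 : Fin d → ℝ) ∈ U)
    (hdiam : ∀ u ∈ U, ∀ v ∈ U, Real.sqrt (∑ i, (u i - v i) ^ 2) ≤ D)
    -- master points and gradients for rounds 1,…,T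
    (w : ℕ → Fin d → ℝ) (hw : ∀ t, 1 ≤ t → t ≤ T → w t ∈ U)
    (g : ℕ → Fin d → ℝ) (hg : ∀ t, 1 ≤ t → t ≤ T → Real.sqrt (∑ i, (g t i) ^ 2) ≤ G)
    -- the rank-one matrices M_t = g_t g_tᵀ
    (M : ℕ → Matrix (Fin d) (Fin d) ℝ)
    (hM : ∀ t, M t = Matrix.of fun i j => g t i * g t j)
    -- the slave's covariance matrices Σ_{t+1}^η = (D⁻²·I + 2η²·Σ_{s≤t} M_s)⁻¹
    (S : ℕ → Matrix (Fin d) (Fin d) ℝ)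
    (hS : ∀ t, 1 ≤ t → S (t + 1) =
      ((D ^ 2)⁻¹ • (1 : Matrix (Fin d) (Fin d) ℝ) + (2 * η ^ 2) • ∑ s ∈ Finset.Icc 1 t, M s)⁻¹)
    -- the slave iterates: w_1^η = 0, unprojected update w̃, projection onto U
    (wη wtil : ℕ → Fin d → ℝ) (hwη1 : wη 1 = 0)
    (hwtil : ∀ t, 1 ≤ t → t ≤ T → wtil (t + 1) =
      wη t - (S (t + 1)).mulVec (η • g t + (2 * η ^ 2) • (M t).mulVec (wη t - w t)))
    (hproj : ∀ t, 1 ≤ t → t ≤ T → wη (t + 1) ∈ U ∧ ∀ u ∈ U,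
      (wη (t + 1) - wtil (t + 1)) ⬝ᵥ (S (t + 1))⁻¹.mulVec (wη (t + 1) - wtil (t + 1)) ≤
        (u - wtil (t + 1)) ⬝ᵥ (S (t + 1))⁻¹.mulVec (u - wtil (t + 1)))
    -- the surrogate loss ℓ_t^η(u) = −η⟨w_t − u, g_t⟩ + η²⟨u − w_t, g_t⟩²
    (ℓ : ℕ → (Fin d → ℝ) → ℝ)
    (hℓ : ∀ t u, ℓ t u = -η * ((w t - u) ⬝ᵥ g t) + η ^ 2 * ((u - w t) ⬝ᵥ g t) ^ 2) :
    ∀ u ∈ U,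
      ∑ t ∈ Finset.Icc 1 T, ℓ t (wη t) ≤
        ∑ t ∈ Finset.Icc 1 T, ℓ t u + (∑ i, (u i) ^ 2) / (2 * D ^ 2) +
          (1 / 2) * Real.log
            (Matrix.det (1 + (2 * η ^ 2 * D ^ 2) • ∑ t ∈ Finset.Icc 1 T, M t)) :=
  stmt_8_general D G η hD hG hη hη' U hUconv hU0 hdiam w hw g hg M hM S hS wη wtil hwη1 hwtil hproj
    ℓ hℓ
end

section
/- Let d ≥ 1, D, G > 0 and 0 < η ≤ 1/(5DG). Let w, μ ∈ ℝ^d with ‖w − μ‖ ≤ D, let g ∈ ℝ^d with ‖g‖ ≤ G, and let Σ be a d×d real symmetric positive definite matrix. Define ℓ(u) = −η⟨w − u, g⟩ + η²(⟨u − w, g⟩)². Then (2π)^{−d/2}·(det Σ)^{−1/2}·∫_{ℝ^d} exp(−ℓ(u))·exp(−(1/2)·⟨u − μ, Σ^{−1}(u − μ)⟩) du ≤ exp(−ℓ(μ)). -/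
/-!
Factor `Σ = M Mᵀ` with `Mᵀ g` a multiple of the first basis vector (a square root of `Σ`
followed by a rotation). The substitution `u = μ + M y` turns the integral into a standard
Gaussian integral of a function of `y₀` alone, so everything reduces to one dimension: for
`z ~ N(x, a²)` with `x = η⟨μ - w, g⟩` one needs `E[exp (-z - z²)] ≤ exp (-x - x²)`.
Completing the square, the ratio of the two sides is
`(1 + s)^(-1/2) exp (s (1 + 2x)² / (4 (1 + s)))` with `s = 2a²`; it is at most `1` because
`(1 + 2x)² ≤ 2` (as `|x| ≤ ηDG ≤ 1/5`) and `s / (1 + s) ≤ log (1 + s)`.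
-/

open Matrix MeasureTheory Real

theorem integral_exp_neg_mul_sq_add_mul {b : ℝ} (hb : b ≠ 0) (c : ℝ) :
    ∫ t : ℝ, exp (-b * t ^ 2 + c * t) = √(π / b) * exp (c ^ 2 / (4 * b)) := by
  have hsq : ∀ t : ℝ, -b * t ^ 2 + c * t = -b * (t - c / (2 * b)) ^ 2 + c ^ 2 / (4 * b) := by
    intro t; field_simp; ring
  simp_rw [hsq, exp_add]
  rw [integral_mul_const, integral_sub_right_eq_self (fun t => exp (-b * t ^ 2)),
    integral_gaussian]

theorem exp_one_sub_inv_div_two_le_sqrt {y : ℝ} (hy : 0 < y) : exp ((1 - y⁻¹) / 2) ≤ √y :=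
  calc exp ((1 - y⁻¹) / 2) ≤ exp (log y / 2) := by gcongr; exact one_sub_inv_le_log_of_pos hy
    _ = √y := by rw [← log_sqrt hy.le, exp_log (sqrt_pos.mpr hy)]

theorem integral_exp_neg_add_sq_mul_exp_neg_half_sq_le {x : ℝ} (hx : (1 + 2 * x) ^ 2 ≤ 2)
    (a : ℝ) :
    ∫ t : ℝ, exp (-(a * t + x) - (a * t + x) ^ 2) * exp (-(1 / 2) * t ^ 2) ≤
      √(2 * π) * exp (-x - x ^ 2) := by
  have hexp : ∀ t : ℝ, exp (-(a * t + x) - (a * t + x) ^ 2) * exp (-(1 / 2) * t ^ 2) =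
      exp (-x - x ^ 2) * exp (-(a ^ 2 + 1 / 2) * t ^ 2 + (-a * (1 + 2 * x)) * t) := by
    intro t; rw [← exp_add, ← exp_add]; ring_nf
  simp_rw [hexp]
  rw [integral_const_mul, integral_exp_neg_mul_sq_add_mul (by positivity), mul_comm]
  gcongr
  have hs : 0 < 1 + 2 * a ^ 2 := by positivity
  have hexponent :
      (-a * (1 + 2 * x)) ^ 2 / (4 * (a ^ 2 + 1 / 2)) ≤ (1 - (1 + 2 * a ^ 2)⁻¹) / 2 := by
    rw [div_le_iff₀ (by positivity)]
    field_simp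
    nlinarith [mul_le_mul_of_nonneg_left hx (by positivity : 0 ≤ a ^ 2 * (1 + 2 * a ^ 2))]
  calc √(π / (a ^ 2 + 1 / 2)) * exp ((-a * (1 + 2 * x)) ^ 2 / (4 * (a ^ 2 + 1 / 2)))
      ≤ √(2 * π) / √(1 + 2 * a ^ 2) * √(1 + 2 * a ^ 2) := by
        gcongr
        · rw [← sqrt_div (by positivity)]; apply le_of_eq; congr 1; field_simp; ring
        · exact (exp_le_exp.mpr hexponent).trans (exp_one_sub_inv_div_two_le_sqrt hs)
    _ = √(2 * π) := div_mul_cancel₀ _ (sqrt_pos.mpr hs).ne'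

section

variable {ι : Type*} [Fintype ι]

theorem abs_dotProduct_le_sqrt_mul_sqrt_s12 (v w : ι → ℝ) :
    |v ⬝ᵥ w| ≤ √(∑ i, v i ^ 2) * √(∑ i, w i ^ 2) := by
  simpa [EuclideanSpace.norm_eq, EuclideanSpace.inner_eq_star_dotProduct, dotProduct_comm] using
    abs_real_inner_le_norm (WithLp.toLp 2 v) (WithLp.toLp 2 w)

variable [DecidableEq ι]

theorem Matrix.exists_mem_orthogonalGroup_transpose_mulVec_eq_single (v : ι → ℝ) (i₀ : ι) :
    ∃ Q ∈ orthogonalGroup ι ℝ, ∃ σ : ℝ, Qᵀ *ᵥ v = Pi.single i₀ σ := by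
  set e : EuclideanSpace ℝ ι := WithLp.toLp 2 v
  by_cases he : e = 0
  · refine ⟨1, one_mem _, 0, ?_⟩
    have hv : v = 0 := congrArg WithLp.ofLp he
    simp [hv]
  obtain ⟨b, hb⟩ := Orthonormal.exists_orthonormalBasis_extension_of_card_eq (𝕜 := ℝ)
    (v := fun _ : ι => ‖e‖⁻¹ • e) (s := {i₀}) (by simp)
    (orthonormal_subsingleton_iff.mpr fun _ => norm_smul_inv_norm he)
  have he_eq : ‖e‖ • b i₀ = e := by
    rw [hb i₀ rfl, smul_inv_smul₀ (norm_ne_zero_iff.mpr he)]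
  refine ⟨(EuclideanSpace.basisFun ι ℝ).toBasis.toMatrix b,
    (EuclideanSpace.basisFun ι ℝ).toMatrix_orthonormalBasis_mem_orthogonal b, ‖e‖,
    funext fun j => ?_⟩
  calc _ = inner ℝ (b j) (‖e‖ • b i₀) := by
        simp [he_eq, mulVec, dotProduct, Module.Basis.toMatrix_apply,
          EuclideanSpace.inner_eq_star_dotProduct, e, mul_comm]
    _ = _ := by
        rw [inner_smul_right, orthonormal_iff_ite.mp b.orthonormal, Pi.single_apply]
        simp

open scoped MatrixOrder in
theorem Matrix.PosSemidef.exists_mul_transpose_eq_and_transpose_mulVec_eq_single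
    {S : Matrix ι ι ℝ} (hS : S.PosSemidef) (g : ι → ℝ) (i₀ : ι) :
    ∃ M : Matrix ι ι ℝ, M * Mᵀ = S ∧ ∃ σ : ℝ, Mᵀ *ᵥ g = Pi.single i₀ σ := by
  obtain ⟨B, rfl⟩ := CStarAlgebra.nonneg_iff_eq_star_mul_self.mp hS.nonneg
  obtain ⟨Q, hQ, σ, hQg⟩ :=
    exists_mem_orthogonalGroup_transpose_mulVec_eq_single (B *ᵥ g) i₀
  refine ⟨Bᵀ * Q, ?_, σ, ?_⟩
  · rw [transpose_mul, transpose_transpose, Matrix.mul_assoc, ← Matrix.mul_assoc Q,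
      (mem_orthogonalGroup_iff ι ℝ).mp hQ, Matrix.one_mul, star_eq_conjTranspose,
      conjTranspose_eq_transpose_of_trivial]
  · rw [transpose_mul, transpose_transpose, ← mulVec_mulVec, hQg]

theorem Matrix.dotProduct_inv_mulVec_of_mul_transpose_eq {M S : Matrix ι ι ℝ}
    (hMS : M * Mᵀ = S) (hM : IsUnit M.det) (y : ι → ℝ) :
    M *ᵥ y ⬝ᵥ S⁻¹ *ᵥ (M *ᵥ y) = y ⬝ᵥ y := by
  subst hMS
  rw [mul_inv_rev, mulVec_mulVec, Matrix.mul_assoc, nonsing_inv_mul _ hM, Matrix.mul_one,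
    dotProduct_mulVec, ← mulVec_transpose, transpose_nonsing_inv, transpose_transpose,
    mulVec_mulVec, nonsing_inv_mul _ hM, one_mulVec]

theorem Matrix.integral_eq_abs_det_mul_integral_comp_mulVec_add {M : Matrix ι ι ℝ}
    (hM : M.det ≠ 0) (f : (ι → ℝ) → ℝ) (a : ι → ℝ) :
    ∫ x, f x = |M.det| * ∫ y, f (M *ᵥ y + a) := by
  have hemb : MeasurableEmbedding (toLin' M) :=
    (LinearMap.isClosedEmbedding_of_injective (LinearMap.ker_eq_bot.mpr
      (mulVec_injective_iff_isUnit.mpr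
        ((isUnit_iff_isUnit_det M).mpr hM.isUnit)))).measurableEmbedding
  rw [← integral_add_right_eq_self f a]
  simp_rw [← toLin'_apply]
  rw [← hemb.integral_map (fun x => f (x + a)), Real.map_matrix_volume_pi_eq_smul_volume_pi hM,
    integral_smul_measure, ENNReal.toReal_ofReal (abs_nonneg _), smul_eq_mul, ← mul_assoc,
    abs_inv, mul_inv_cancel₀ (abs_ne_zero.mpr hM), one_mul]

theorem integral_comp_apply_mul_exp_neg_half_dotProduct_self (φ : ℝ → ℝ) (i₀ : ι) :
    ∫ y : ι → ℝ, φ (y i₀) * exp (-(1 / 2) * (y ⬝ᵥ y)) =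
      √(2 * π) ^ (Fintype.card ι - 1) * ∫ t, φ t * exp (-(1 / 2) * t ^ 2) := by
  have hprod : ∀ y : ι → ℝ, φ (y i₀) * exp (-(1 / 2) * (y ⬝ᵥ y)) =
      ∏ i, (if i = i₀ then φ (y i) else 1) * exp (-(1 / 2) * y i ^ 2) := by
    intro y
    rw [Finset.prod_mul_distrib, Fintype.prod_ite_eq', ← exp_sum, dotProduct, Finset.mul_sum]
    simp [sq]
  have hgauss : ∫ t : ℝ, exp (-(1 / 2) * t ^ 2) = √(2 * π) := by
    rw [integral_gaussian]; ring_nf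
  simp_rw [hprod]
  rw [integral_fintype_prod_volume_eq_prod
      (fun i t => (if i = i₀ then φ t else 1) * exp (-(1 / 2) * t ^ 2)),
    ← Finset.mul_prod_erase _ _ (Finset.mem_univ i₀),
    Finset.prod_congr rfl (g := fun _ => √(2 * π))
      fun i hi => by simp only [Finset.ne_of_mem_erase hi, if_false, one_mul, hgauss],
    Finset.prod_const, Finset.card_erase_of_mem (Finset.mem_univ _), Finset.card_univ, mul_comm]
  simp

theorem Matrix.PosDef.exists_integral_comp_dotProduct_mul_gaussian_eq [Nonempty ι]
    {S : Matrix ι ι ℝ} (hS : S.PosDef) (μ g : ι → ℝ) (F : ℝ → ℝ) :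
    ∃ σ : ℝ, ∫ u, F ((u - μ) ⬝ᵥ g) * exp (-(1 / 2) * ((u - μ) ⬝ᵥ S⁻¹ *ᵥ (u - μ))) =
      √S.det *
        (√(2 * π) ^ (Fintype.card ι - 1) * ∫ t, F (σ * t) * exp (-(1 / 2) * t ^ 2)) := by
  let i₀ : ι := Classical.arbitrary ι
  obtain ⟨M, hMS, σ, hMg⟩ :=
    hS.posSemidef.exists_mul_transpose_eq_and_transpose_mulVec_eq_single g i₀
  have hdet : M.det ^ 2 = S.det := by rw [← hMS, det_mul, det_transpose, sq]
  have hM : M.det ≠ 0 := fun h => hS.det_pos.ne' (by rw [← hdet, h]; ring)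
  refine ⟨σ, ?_⟩
  rw [integral_eq_abs_det_mul_integral_comp_mulVec_add hM _ μ, ← sqrt_sq_eq_abs, hdet,
    ← integral_comp_apply_mul_exp_neg_half_dotProduct_self _ i₀]
  congr 2 with y
  rw [add_sub_cancel_right, dotProduct_inv_mulVec_of_mul_transpose_eq hMS hM.isUnit,
    dotProduct_comm, dotProduct_mulVec, ← mulVec_transpose, hMg, single_dotProduct, mul_comm]

end

theorem Real.rpow_neg_natCast_div_two_mul_sqrt_pow {x : ℝ} (hx : 0 < x) (n : ℕ) :
    x ^ (-(n : ℝ) / 2) * √x ^ n = 1 := by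
  rw [sqrt_eq_rpow, ← rpow_natCast, ← rpow_mul hx.le, ← rpow_add hx]
  ring_nf
  exact rpow_zero x

/-- Lemma 9 of the paper (Gaussian exp-concavity, full case): the Gaussian expectation of
`e^{−ℓ(u)}` under `u ~ N(μ, Σ)` with `μ` at distance at most `D` from `w` is at most
`e^{−ℓ(μ)}`, written as an explicit Lebesgue integral against the Gaussian density.
Here `ℝ^d` is modelled as `Fin d → ℝ` with the explicit Euclidean norm. -/
theorem stmt_12 {d : ℕ} (hd : 1 ≤ d) (D G η : ℝ) (hD : 0 < D) (hG : 0 < G)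
    (hη : 0 < η) (hη' : η ≤ 1 / (5 * D * G))
    (w μ g : Fin d → ℝ)
    (hwμ : Real.sqrt (∑ i, (w i - μ i) ^ 2) ≤ D)
    (hg : Real.sqrt (∑ i, (g i) ^ 2) ≤ G)
    (S : Matrix (Fin d) (Fin d) ℝ) (hS : S.PosDef)
    (ℓ : (Fin d → ℝ) → ℝ)
    (hℓ : ∀ u, ℓ u = -η * ((w - u) ⬝ᵥ g) + η ^ 2 * ((u - w) ⬝ᵥ g) ^ 2) :
    (2 * Real.pi) ^ (-(d : ℝ) / 2) * S.det ^ (-(1 : ℝ) / 2) *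
        ∫ u : Fin d → ℝ,
          Real.exp (-ℓ u) * Real.exp (-(1 / 2) * ((u - μ) ⬝ᵥ S⁻¹.mulVec (u - μ))) ≤
      Real.exp (-ℓ μ) := by
  have : Nonempty (Fin d) := ⟨⟨0, hd⟩⟩
  set m := (μ - w) ⬝ᵥ g
  have hx : (1 + 2 * (η * m)) ^ 2 ≤ 2 := by
    have hm : |m| ≤ D * G := by
      rw [← abs_neg, ← neg_dotProduct, neg_sub]
      exact (abs_dotProduct_le_sqrt_mul_sqrt_s12 (w - μ) g).trans
        (mul_le_mul hwμ hg (sqrt_nonneg _) hD.le)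
    have hηm : |η * m| ≤ 1 / 5 := by
      rw [abs_mul, abs_of_pos hη]
      calc η * |m| ≤ 1 / (5 * D * G) * (D * G) := by gcongr
        _ = 1 / 5 := by field_simp
    nlinarith [abs_le.mp hηm]
  have hloss : ∀ u,
      -ℓ u = -(η * ((u - μ) ⬝ᵥ g) + η * m) - (η * ((u - μ) ⬝ᵥ g) + η * m) ^ 2 := by
    intro u
    rw [hℓ, ← neg_sub u w, neg_dotProduct, ← sub_add_sub_cancel u μ w, add_dotProduct]
    ring
  obtain ⟨σ, hσ⟩ := hS.exists_integral_comp_dotProduct_mul_gaussian_eq μ g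
    fun z => exp (-(η * z + η * m) - (η * z + η * m) ^ 2)
  have h1D := integral_exp_neg_add_sq_mul_exp_neg_half_sq_le hx (η * σ)
  simp only [mul_assoc] at hσ h1D
  simp_rw [hloss, sub_self, zero_dotProduct, mul_zero, zero_add, hσ, Fintype.card_fin]
  have hdet_pos := hS.det_pos
  calc _ ≤ (2 * π) ^ (-(d : ℝ) / 2) * S.det ^ (-(1 : ℝ) / 2) *
        (√S.det * (√(2 * π) ^ (d - 1) * (√(2 * π) * exp (-(η * m) - (η * m) ^ 2)))) := by
        gcongr
    _ = (S.det ^ (-((1 : ℕ) : ℝ) / 2) * √S.det ^ 1) *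
        ((2 * π) ^ (-(d : ℝ) / 2) * √(2 * π) ^ (d - 1 + 1)) *
          exp (-(η * m) - (η * m) ^ 2) := by
        rw [Nat.cast_one]; ring
    _ = exp (-(η * m) - (η * m) ^ 2) := by
        rw [Nat.sub_add_cancel hd, rpow_neg_natCast_div_two_mul_sqrt_pow hdet_pos,
          rpow_neg_natCast_div_two_mul_sqrt_pow (by positivity), one_mul, one_mul]
end

section
/- Let D, G > 0, let 0 < η ≤ 1/(5DG), let v ≥ 0, and let r ∈ ℝ with |r| ≤ D·G. Then (1 − 2ηr)²·η²·v ≤ (1 + 2η²v)·ln(1 + 2η²v). -/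
open Real

lemma le_one_add_mul_log_one_add {x : ℝ} (hx : 0 ≤ x) : x ≤ (1 + x) * log (1 + x) := by
  have hpos : 0 < 1 + x := by linarith
  calc x = (1 + x) * (1 - (1 + x)⁻¹) := by field_simp; ring
    _ ≤ (1 + x) * log (1 + x) := by gcongr; exact one_sub_inv_le_log_of_pos hpos

lemma abs_mul_le_of_le_div {η r c a : ℝ} (hc : 0 < c) (hη : 0 ≤ η)
    (hηc : η ≤ a / c) (hr : |r| ≤ c) : |η * r| ≤ a := by
  calc |η * r| = η * |r| := by rw [abs_mul, abs_of_nonneg hη]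
    _ ≤ a / c * c := mul_le_mul hηc hr (abs_nonneg r) (hηc.trans' hη)
    _ = a := div_mul_cancel₀ a hc.ne'

lemma sq_one_sub_two_mul_le_two {t : ℝ} (ht : |t| ≤ 1 / 5) : (1 - 2 * t) ^ 2 ≤ 2 := by
  obtain ⟨hlo, hhi⟩ := abs_le.mp ht
  nlinarith

/-- Key scalar inequality in the proof of Gaussian exp-concavity (Lemma 9):
for `0 < η ≤ 1/(5DG)`, `v ≥ 0` and `|r| ≤ D·G`,
`(1 - 2ηr)²·η²·v ≤ (1 + 2η²v)·ln(1 + 2η²v)`. -/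
theorem stmt_14 (D G η v r : ℝ) (hD : 0 < D) (hG : 0 < G)
    (hη : 0 < η) (hη' : η ≤ 1 / (5 * D * G)) (hv : 0 ≤ v) (hr : |r| ≤ D * G) :
    (1 - 2 * η * r) ^ 2 * η ^ 2 * v ≤ (1 + 2 * η ^ 2 * v) * Real.log (1 + 2 * η ^ 2 * v) := by
  have hηr : |η * r| ≤ 1 / 5 := by
    refine abs_mul_le_of_le_div (by positivity) hη.le ?_ hr
    rwa [div_div, ← mul_assoc]
  have hsq : (1 - 2 * (η * r)) ^ 2 ≤ 2 := sq_one_sub_two_mul_le_two hηr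
  calc (1 - 2 * η * r) ^ 2 * η ^ 2 * v = (1 - 2 * (η * r)) ^ 2 * (η ^ 2 * v) := by ring
    _ ≤ 2 * (η ^ 2 * v) := by gcongr
    _ = 2 * η ^ 2 * v := by ring
    _ ≤ (1 + 2 * η ^ 2 * v) * log (1 + 2 * η ^ 2 * v) :=
      le_one_add_mul_log_one_add (by positivity)
end

section
/- Let σ > 0, let μ, ν ∈ ℝ, and let P be a probability measure on ℝ that is absolutely continuous with respect to Lebesgue measure, has finite second moment ∫ x² dP(x) < ∞, and has mean ∫ x dP(x) = ν. Then, as an identity of extended nonnegative reals, KL(P ‖ N(μ, σ²)) = KL(P ‖ N(ν, σ²)) + (ν − μ)²/(2σ²), where N(m, σ²) is the Gaussian distribution on ℝ with mean m and variance σ² and KL denotes the Kullback–Leibler divergence. -/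
open MeasureTheory ProbabilityTheory
open scoped ENNReal Classical

/-- The Kullback–Leibler divergence of `P` from `Q`, as an extended nonnegative real:
`∫ log(dP/dQ) dP` if `P ≪ Q` and the log-likelihood ratio is integrable, and `∞`
otherwise. -/
noncomputable def klDiv (P Q : Measure ℝ) : ℝ≥0∞ :=
  if P ≪ Q ∧ Integrable (llr P Q) P then ENNReal.ofReal (∫ x, llr P Q x ∂P) else ⊤

/-! Gaussian distributions with the same variance differ, at the level of log-densities,
by an affine function `x ↦ ((x - μ)² - (x - ν)²) / (2σ²)`. Hence `llr P N(μ, σ²)` is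
`llr P N(ν, σ²)` plus that function, whose `P`-integral is `(ν - μ)² / (2σ²)` as soon as `P`
has mean `ν`. Gibbs' inequality keeps both summands nonnegative, so the identity of real
integrals passes through `ENNReal.ofReal`; when either log-likelihood ratio fails to be
integrable, so does the other, and both divergences are `∞`. -/

lemma integral_llr_nonneg {α : Type*} [MeasurableSpace α] {P Q : Measure α}
    [IsProbabilityMeasure P] [IsProbabilityMeasure Q] (hPQ : P ≪ Q)
    (hint : Integrable (llr P Q) P) : 0 ≤ ∫ x, llr P Q x ∂P := by
  simpa using InformationTheory.integral_llr_add_sub_measure_univ_nonneg hPQ hint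

lemma llr_ae_eq_llr_sub_log_rnDeriv {α : Type*} [MeasurableSpace α] {P Q κ : Measure α}
    [SigmaFinite P] [SigmaFinite Q] [SigmaFinite κ] (hPQ : P ≪ Q) (hQκ : Q ≪ κ) :
    llr P Q =ᵐ[P] fun x => llr P κ x - Real.log (Q.rnDeriv κ x).toReal := by
  filter_upwards [(hPQ.trans hQκ).ae_le (Measure.rnDeriv_mul_rnDeriv hPQ),
    Measure.rnDeriv_pos hPQ, hPQ.ae_le (Measure.rnDeriv_lt_top P Q),
    hPQ.ae_le (Measure.rnDeriv_pos hQκ), (hPQ.trans hQκ).ae_le (Measure.rnDeriv_lt_top Q κ)]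
    with x hchain hPQ_pos hPQ_lt hQκ_pos hQκ_lt
  rw [llr, llr, ← hchain, Pi.mul_apply, ENNReal.toReal_mul,
    Real.log_mul (ENNReal.toReal_pos hPQ_pos.ne' hPQ_lt.ne).ne'
      (ENNReal.toReal_pos hQκ_pos.ne' hQκ_lt.ne).ne']
  ring

lemma log_gaussianPDFReal (m : ℝ) {v : NNReal} (hv : v ≠ 0) (x : ℝ) :
    Real.log (gaussianPDFReal m v x) = -Real.log √(2 * Real.pi * v) - (x - m) ^ 2 / (2 * v) := by
  rw [gaussianPDFReal, Real.log_mul (by positivity) (Real.exp_pos _).ne', Real.log_exp,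
    Real.log_inv]
  ring

lemma llr_gaussianReal_ae_eq (P : Measure ℝ) [SigmaFinite P] (hac : P ≪ volume) (m : ℝ)
    {v : NNReal} (hv : v ≠ 0) :
    llr P (gaussianReal m v) =ᵐ[P]
      fun x => llr P volume x + Real.log √(2 * Real.pi * v) + (x - m) ^ 2 / (2 * v) := by
  have hPG : P ≪ gaussianReal m v := hac.trans (gaussianReal_absolutelyContinuous' m hv)
  filter_upwards [llr_ae_eq_llr_sub_log_rnDeriv hPG (gaussianReal_absolutelyContinuous m hv),
    hac.ae_le (rnDeriv_gaussianReal m v)] with x hllr hpdf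
  rw [hllr, hpdf, toReal_gaussianPDF, log_gaussianPDFReal m hv]
  ring

lemma llr_gaussianReal_ae_eq_llr_gaussianReal_add (P : Measure ℝ) [SigmaFinite P]
    (hac : P ≪ volume) (μ ν : ℝ) {v : NNReal} (hv : v ≠ 0) :
    llr P (gaussianReal μ v) =ᵐ[P]
      llr P (gaussianReal ν v) + fun x => ((x - μ) ^ 2 - (x - ν) ^ 2) / (2 * v) := by
  filter_upwards [llr_gaussianReal_ae_eq P hac μ hv, llr_gaussianReal_ae_eq P hac ν hv]
    with x hμ hν
  rw [Pi.add_apply, hμ, hν]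
  ring

lemma sq_sub_sub_sq_sub_div (x μ ν c : ℝ) :
    ((x - μ) ^ 2 - (x - ν) ^ 2) / c = 2 * (ν - μ) / c * x + (μ ^ 2 - ν ^ 2) / c := by
  ring

lemma integrable_sq_sub_sub_sq_sub_div {P : Measure ℝ} [IsFiniteMeasure P]
    (hid : Integrable (fun x => x) P) (μ ν c : ℝ) :
    Integrable (fun x => ((x - μ) ^ 2 - (x - ν) ^ 2) / c) P := by
  simp_rw [sq_sub_sub_sq_sub_div]
  exact (hid.const_mul _).add (integrable_const _)

lemma integral_sq_sub_sub_sq_sub_div {P : Measure ℝ} [IsProbabilityMeasure P]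
    (hid : Integrable (fun x => x) P) {ν : ℝ} (hmean : ∫ x, x ∂P = ν) (μ c : ℝ) :
    ∫ x, ((x - μ) ^ 2 - (x - ν) ^ 2) / c ∂P = (ν - μ) ^ 2 / c := by
  simp_rw [sq_sub_sub_sq_sub_div]
  rw [integral_add (hid.const_mul _) (integrable_const _), integral_const_mul, hmean,
    integral_const, probReal_univ, one_smul]
  ring

lemma klDiv_eq_add_of_llr_ae_eq {P Q R : Measure ℝ} [IsProbabilityMeasure P]
    [IsProbabilityMeasure R] (hPQ : P ≪ Q) (hPR : P ≪ R) {g : ℝ → ℝ} (hg : Integrable g P)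
    (hg_nonneg : 0 ≤ ∫ x, g x ∂P) (hllr : llr P Q =ᵐ[P] llr P R + g) :
    klDiv P Q = klDiv P R + ENNReal.ofReal (∫ x, g x ∂P) := by
  have hint_iff : Integrable (llr P Q) P ↔ Integrable (llr P R) P := by
    rw [integrable_congr hllr]
    exact ⟨fun h => by simpa using h.sub hg, fun h => h.add hg⟩
  by_cases hint : Integrable (llr P R) P
  · rw [klDiv, klDiv, if_pos ⟨hPQ, hint_iff.2 hint⟩, if_pos ⟨hPR, hint⟩,
      integral_congr_ae hllr, integral_add' hint hg,
      ENNReal.ofReal_add (integral_llr_nonneg hPR hint) hg_nonneg]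
  · rw [klDiv, klDiv, if_neg (fun h => hint (hint_iff.1 h.2)), if_neg (fun h => hint h.2),
      top_add]

/-- One-dimensional instance of Lemma 8 (projection of Gaussians): for a probability
measure `P` on `ℝ` with mean `ν`, finite second moment and `P ≪ Lebesgue`,
`KL(P ‖ N(μ, σ²)) = KL(P ‖ N(ν, σ²)) + (ν − μ)²/(2σ²)` as extended nonnegative reals. -/
theorem stmt_15 (σ μ ν : ℝ) (hσ : 0 < σ) (P : Measure ℝ) [IsProbabilityMeasure P]
    (hac : P ≪ MeasureTheory.volume)
    (hmom : Integrable (fun x => x ^ 2) P)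
    (hmean : ∫ x, x ∂P = ν) :
    klDiv P (gaussianReal μ (σ ^ 2).toNNReal) =
      klDiv P (gaussianReal ν (σ ^ 2).toNNReal) +
        ENNReal.ofReal ((ν - μ) ^ 2 / (2 * σ ^ 2)) := by
  have hv : (σ ^ 2).toNNReal ≠ 0 := by simpa using hσ.ne'
  have hvσ : ((σ ^ 2).toNNReal : ℝ) = σ ^ 2 := Real.coe_toNNReal _ (sq_nonneg σ)
  have hid : Integrable (fun x => x) P :=
    ((memLp_two_iff_integrable_sq aestronglyMeasurable_id).2 hmom).integrable one_le_two
  have hllr := llr_gaussianReal_ae_eq_llr_gaussianReal_add P hac μ ν hv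
  rw [hvσ] at hllr
  rw [← integral_sq_sub_sub_sq_sub_div hid hmean μ (2 * σ ^ 2)]
  refine klDiv_eq_add_of_llr_ae_eq (hac.trans (gaussianReal_absolutelyContinuous' μ hv))
    (hac.trans (gaussianReal_absolutelyContinuous' ν hv))
    (integrable_sq_sub_sub_sq_sub_div hid μ ν _) ?_ hllr
  rw [integral_sq_sub_sub_sq_sub_div hid hmean]
  positivity
end

section
/- Let (Ω, 𝔽, P) be a probability space, let β ∈ (0, 1], B > 0, C > 0, and let X, Y be integrable real random variables with X², Y² integrable, such that X ≤ Y almost surely, Y ≤ C almost surely, E[X] ≥ 0, and E[X²] ≤ B·(E[X])^β. Then E[Y²] ≤ B'·(E[Y])^β, where B' = max{B, (2/β)·C^{2−β}}. -/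
open MeasureTheory

/-- Tangent-line / Bernoulli key inequality: for `0 ≤ a ≤ b ≤ C`, `β ∈ (0,1]`,
`2C(b-a) ≤ (2/β) C^(2-β) (b^β - a^β)`. -/
lemma key_ineq {β C a b : ℝ} (hβ0 : 0 < β) (hβ1 : β ≤ 1) (hC : 0 < C)
    (ha : 0 ≤ a) (hab : a ≤ b) (hbC : b ≤ C) :
    2 * C * (b - a) ≤ (2 / β) * C ^ (2 - β) * (b ^ β - a ^ β) := by
  rcases eq_or_lt_of_le (ha.trans hab) with hb0 | hb0
  · have ha0 : a = 0 := le_antisymm (hab.trans hb0.symm.le) ha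
    simp [← hb0, ha0]
  -- tangent line inequality: a^β ≤ b^β + β b^(β-1) (a - b)
  have hs : (-1 : ℝ) ≤ a / b - 1 := by
    have : 0 ≤ a / b := div_nonneg ha hb0.le
    linarith
  have htan := rpow_one_add_le_one_add_mul_self hs hβ0.le hβ1
  rw [add_sub_cancel] at htan
  -- multiply by b^β
  have hbβ : (0:ℝ) < b ^ β := Real.rpow_pos_of_pos hb0 β
  have h1 : a ^ β ≤ b ^ β + β * b ^ (β - 1) * (a - b) := by
    have h := mul_le_mul_of_nonneg_left htan hbβ.le
    have hdiv : (a / b) ^ β = a ^ β / b ^ β := Real.div_rpow ha hb0.le β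
    rw [hdiv] at h
    have hb1 : b ^ (β - 1) = b ^ β / b := by
      rw [Real.rpow_sub hb0, Real.rpow_one]
    have hl : b ^ β * (a ^ β / b ^ β) = a ^ β := by field_simp
    have hr : b ^ β * (1 + β * (a / b - 1)) = b ^ β + β * b ^ (β - 1) * (a - b) := by
      rw [hb1]; field_simp
    rw [hl, hr] at h
    exact h
  -- so β b^(β-1) (b - a) ≤ b^β - a^β
  have h2 : β * b ^ (β - 1) * (b - a) ≤ b ^ β - a ^ β := by nlinarith
  -- b^(β-1) ≥ C^(β-1)
  have h3 : C ^ (β - 1) ≤ b ^ (β - 1) := by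
    apply Real.rpow_le_rpow_of_nonpos hb0 hbC (by linarith)
  have h4 : β * C ^ (β - 1) * (b - a) ≤ b ^ β - a ^ β := by
    have hba : 0 ≤ b - a := by linarith
    nlinarith [mul_le_mul_of_nonneg_left h3 hβ0.le]
  -- multiply by (2/β) C^(2-β)
  have hC2β : (0:ℝ) < C ^ (2 - β) := Real.rpow_pos_of_pos hC _
  have hmul : C ^ (2 - β) * C ^ (β - 1) = C := by
    rw [← Real.rpow_add hC]; norm_num
  calc 2 * C * (b - a) = (2 / β) * C ^ (2 - β) * (β * C ^ (β - 1) * (b - a)) := by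
        rw [show (2 / β) * C ^ (2 - β) * (β * C ^ (β - 1) * (b - a))
            = (β / β) * (2 * (C ^ (2 - β) * C ^ (β - 1)) * (b - a)) from by ring,
          hmul, div_self hβ0.ne']
        ring
    _ ≤ (2 / β) * C ^ (2 - β) * (b ^ β - a ^ β) := by
        apply mul_le_mul_of_nonneg_left h4
        positivity

/-- Appendix H of the paper (Bernstein for linearized excess loss): if `X ≤ Y ≤ C` a.s.,
`E[X] ≥ 0` and `E[X²] ≤ B·E[X]^β`, then `E[Y²] ≤ B'·E[Y]^β` for
`B' = max{B, (2/β)·C^(2−β)}`. -/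
theorem stmt_16 {Ω : Type*} [MeasurableSpace Ω] (P : Measure Ω) [IsProbabilityMeasure P]
    (β B C : ℝ) (hβ : β ∈ Set.Ioc (0 : ℝ) 1) (hB : 0 < B) (hC : 0 < C)
    (X Y : Ω → ℝ)
    (hXint : Integrable X P) (hX2int : Integrable (fun ω => X ω ^ 2) P)
    (hYint : Integrable Y P) (hY2int : Integrable (fun ω => Y ω ^ 2) P)
    (hXY : ∀ᵐ ω ∂P, X ω ≤ Y ω) (hYC : ∀ᵐ ω ∂P, Y ω ≤ C)
    (hEX : 0 ≤ ∫ ω, X ω ∂P)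
    (hbern : ∫ ω, X ω ^ 2 ∂P ≤ B * (∫ ω, X ω ∂P) ^ β) :
    ∫ ω, Y ω ^ 2 ∂P ≤ max B ((2 / β) * C ^ (2 - β)) * (∫ ω, Y ω ∂P) ^ β := by
  obtain ⟨hβ0, hβ1⟩ := hβ
  set a := ∫ ω, X ω ∂P with ha
  set b := ∫ ω, Y ω ∂P with hb
  have hab : a ≤ b := integral_mono_ae hXint hYint hXY
  have hbC : b ≤ C := by
    calc b ≤ ∫ _, C ∂P := integral_mono_ae hYint (integrable_const C) hYC
    _ = C := by simp
  -- pointwise: Y² ≤ X² + 2C(Y - X)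
  have hpt : ∀ᵐ ω ∂P, Y ω ^ 2 ≤ X ω ^ 2 + 2 * C * (Y ω - X ω) := by
    filter_upwards [hXY, hYC] with ω h1 h2
    nlinarith
  have hI2 : Integrable (fun ω => 2 * C * (Y ω - X ω)) P :=
    (hYint.sub hXint).const_mul (2 * C)
  have hint : ∫ ω, Y ω ^ 2 ∂P ≤ ∫ ω, (X ω ^ 2 + 2 * C * (Y ω - X ω)) ∂P :=
    integral_mono_ae hY2int (hX2int.add hI2) hpt
  rw [integral_add hX2int hI2, integral_const_mul, integral_sub hYint hXint] at hint
  have hkey := key_ineq hβ0 hβ1 hC hEX hab hbC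
  have haβ : a ^ β ≤ b ^ β := Real.rpow_le_rpow hEX hab hβ0.le
  have haβ0 : (0:ℝ) ≤ a ^ β := Real.rpow_nonneg hEX β
  set M := (2 / β) * C ^ (2 - β) with hM
  have hBle : B ≤ max B M := le_max_left _ _
  have hMle : M ≤ max B M := le_max_right _ _
  calc ∫ ω, Y ω ^ 2 ∂P ≤ (∫ ω, X ω ^ 2 ∂P) + 2 * C * (b - a) := hint
    _ ≤ B * a ^ β + M * (b ^ β - a ^ β) := by linarith
    _ ≤ max B M * a ^ β + max B M * (b ^ β - a ^ β) := by
        have h1 : B * a ^ β ≤ max B M * a ^ β := mul_le_mul_of_nonneg_right hBle haβ0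
        have h2 : M * (b ^ β - a ^ β) ≤ max B M * (b ^ β - a ^ β) :=
          mul_le_mul_of_nonneg_right hMle (by linarith)
        linarith
    _ = max B M * b ^ β := by ring
end

section
/- Let S be a d×d real symmetric positive semidefinite matrix of rank k ≥ 1 and let c ≥ 0. Then tr((I + c·S)^{−1}·S) ≤ tr(S) / (1 + (c/k)·tr(S)). -/
/-!
Diagonalising `S`, the trace is `∑ μᵢ / (1 + c μᵢ)` over its eigenvalues `μᵢ ≥ 0`; zero
eigenvalues contribute nothing to either side, and over the `k` nonzero ones Jensen's inequality
for the concave map `x ↦ x / (1 + c x)` bounds the average of the terms by the value at the mean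
`tr(S) / k`.
-/

open Finset

theorem concaveOn_div_one_add_mul {c : ℝ} (hc : 0 ≤ c) :
    ConcaveOn ℝ (Set.Ici 0) fun x => x / (1 + c * x) := by
  refine ⟨convex_Ici 0, fun x hx y hy a b ha hb hab => ?_⟩
  simp only [Set.mem_Ici, smul_eq_mul] at *
  have hx' : 0 < 1 + c * x := by positivity
  have hy' : 0 < 1 + c * y := by positivity
  have hm : 0 < 1 + c * (a * x + b * y) := by positivity
  rw [mul_div_assoc', mul_div_assoc', div_add_div _ _ hx'.ne' hy'.ne',
    div_le_div_iff₀ (by positivity) hm]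
  -- after clearing denominators the gap is `a b c (x - y)²`
  obtain rfl : b = 1 - a := by linarith
  nlinarith [mul_nonneg (mul_nonneg (mul_nonneg ha hb) hc) (sq_nonneg (x - y))]

theorem sum_div_one_add_mul_le {ι : Type*} (s : Finset ι) {μ : ι → ℝ}
    (hμ : ∀ i ∈ s, 0 ≤ μ i) {c : ℝ} (hc : 0 ≤ c) :
    ∑ i ∈ s, μ i / (1 + c * μ i) ≤ (∑ i ∈ s, μ i) / (1 + c / #s * ∑ i ∈ s, μ i) := by
  rcases s.eq_empty_or_nonempty with rfl | hs
  · simp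
  have hn : (0 : ℝ) < #s := by exact_mod_cast hs.card_pos
  have hjensen := (concaveOn_div_one_add_mul hc).le_map_sum (t := s) (w := fun _ => (#s : ℝ)⁻¹)
    (p := μ) (fun _ _ => by positivity) (by simp [hn.ne']) hμ
  simp only [smul_eq_mul, ← Finset.mul_sum] at hjensen
  calc ∑ i ∈ s, μ i / (1 + c * μ i)
      = #s * ((#s : ℝ)⁻¹ * ∑ i ∈ s, μ i / (1 + c * μ i)) := by rw [mul_inv_cancel_left₀ hn.ne']
    _ ≤ #s * (((#s : ℝ)⁻¹ * ∑ i ∈ s, μ i) / (1 + c * ((#s : ℝ)⁻¹ * ∑ i ∈ s, μ i))) :=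
        mul_le_mul_of_nonneg_left hjensen hn.le
    _ = _ := by field_simp

theorem sum_div_one_add_mul_le_of_card_filter_ne_zero {ι : Type*} (s : Finset ι) {μ : ι → ℝ}
    (hμ : ∀ i ∈ s, 0 ≤ μ i) {c : ℝ} (hc : 0 ≤ c) :
    ∑ i ∈ s, μ i / (1 + c * μ i) ≤
      (∑ i ∈ s, μ i) / (1 + c / #{i ∈ s | μ i ≠ 0} * ∑ i ∈ s, μ i) := by
  rw [← sum_filter_ne_zero (f := μ),
    ← sum_filter_of_ne (f := fun i => μ i / (1 + c * μ i)) (p := fun i => μ i ≠ 0)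
      fun i _ h => (div_ne_zero_iff.1 h).1]
  exact sum_div_one_add_mul_le _ (fun i hi => hμ i (mem_filter.1 hi).1) hc

theorem cfc_inv_one_add_smul_mul {A : Type*} {p : A → Prop} [Ring A] [StarRing A] [Algebra ℝ A]
    [TopologicalSpace A] [ContinuousFunctionalCalculus ℝ A p] {a : A} {c : ℝ}
    (hspec : ∀ x ∈ spectrum ℝ a, 1 + c * x ≠ 0) (ha : p a := by cfc_tac) :
    cfc (fun x => (1 + c * x)⁻¹ * x) a = Ring.inverse (1 + c • a) * a := by
  have hcont : ContinuousOn (fun x => (1 + c * x)⁻¹) (spectrum ℝ a) :=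
    ContinuousOn.inv₀ (by fun_prop) hspec
  rw [cfc_mul _ _ a hcont, cfc_inv (fun x => 1 + c * x) a hspec, cfc_id' ℝ a,
    cfc_add .., cfc_const_one .., cfc_const_mul .., cfc_id' ℝ a]

theorem Matrix.IsHermitian.trace_cfc {n 𝕜 : Type*} [Fintype n] [DecidableEq n] [RCLike 𝕜]
    {A : Matrix n n 𝕜} (hA : A.IsHermitian) (f : ℝ → ℝ) :
    (cfc f A).trace = ∑ i, (f (hA.eigenvalues i) : 𝕜) := by
  rw [hA.cfc_eq, IsHermitian.cfc, Unitary.conjStarAlgAut_apply, trace_mul_cycle,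
    Unitary.coe_star_mul_self, one_mul, trace_diagonal]
  rfl

theorem stmt_18_general {d k : ℕ} (S : Matrix (Fin d) (Fin d) ℝ)
    (hS : S.PosSemidef) (hrank : S.rank = k) (c : ℝ) (hc : 0 ≤ c) :
    ((1 + c • S)⁻¹ * S).trace ≤ S.trace / (1 + (c / k) * S.trace) := by
  set μ := hS.1.eigenvalues
  have hdenom : ∀ x ∈ spectrum ℝ S, 1 + c * x ≠ 0 := by
    rw [hS.1.spectrum_real_eq_range_eigenvalues]
    rintro _ ⟨i, rfl⟩
    have := hS.eigenvalues_nonneg i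
    positivity
  have htrace : S.trace = ∑ i, μ i := by simpa using hS.1.trace_eq_sum_eigenvalues
  have hk : (k : ℝ) = #{i | μ i ≠ 0} := by
    rw [← hrank, hS.1.rank_eq_card_non_zero_eigs, Fintype.card_subtype]
  calc ((1 + c • S)⁻¹ * S).trace = ∑ i, μ i / (1 + c * μ i) := by
        rw [Matrix.nonsing_inv_eq_ringInverse,
          ← cfc_inv_one_add_smul_mul hdenom hS.1.isSelfAdjoint, hS.1.trace_cfc]
        simp [μ, inv_mul_eq_div]
    _ ≤ S.trace / (1 + (c / k) * S.trace) := by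
        rw [htrace, hk]
        exact sum_div_one_add_mul_le_of_card_filter_ne_zero _ (fun i _ => hS.eigenvalues_nonneg i) hc

/-- Jensen-type trace bound from the proof of Theorem 7: for `S` positive semidefinite of
rank `k ≥ 1` and `c ≥ 0`, `tr((I + cS)⁻¹ S) ≤ tr(S)/(1 + (c/k)·tr(S))`. -/
theorem stmt_18 {d k : ℕ} (hk : 1 ≤ k) (S : Matrix (Fin d) (Fin d) ℝ)
    (hS : S.PosSemidef) (hrank : S.rank = k) (c : ℝ) (hc : 0 ≤ c) :
    ((1 + c • S)⁻¹ * S).trace ≤ S.trace / (1 + (c / k) * S.trace) :=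
  stmt_18_general S hS hrank c hc
end
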